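/- arXiv:2305.10152 — 4 statements merged into one kernel-verified Lean document; each statement's English description precedes it below -/
import Mathlib

section
/- Let S be a nonempty family of k-subsets of [n] with k-binomial decomposition |S| = C(a_0, k) + ... + C(a_t, k-t). Then for every i with 0 ≤ i ≤ k-1, the i-th iterated lower shadow satisfies |∂^i S| ≥ C(a_0, k-i) + C(a_1, k-1-i) + ... + C(a_t, k-t-i). -/
open Finset

/-- Generalized binomial coefficient `C(x, j)` for integers `x` and `j`:
`0` for `j < 0`, and the usual polynomial extension otherwise. -/
def izchoose (x : ℤ) (j : ℤ) : ℤ :=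
  if j < 0 then 0
  else if 0 ≤ x then ((x.toNat).choose j.toNat : ℤ)
  else (-1) ^ j.toNat * (((j - x - 1).toNat).choose j.toNat : ℤ)

/-- `kBinDecomp k m t a` : `m = C(a 0, k) + C(a 1, k-1) + ⋯ + C(a t, k - t)` is the
`k`-binomial (cascade) decomposition of `m`, with `a 0 > a 1 > ⋯ > a t ≥ k - t ≥ 1`. -/
def kBinDecomp (k m t : ℕ) (a : ℕ → ℕ) : Prop :=
  t + 1 ≤ k ∧ (∀ i, i < t → a (i + 1) < a i) ∧ k - t ≤ a t ∧
    m = ∑ i ∈ Finset.range (t + 1), (a i).choose (k - i)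

/-- Full `k`-binomial decomposition: `m = C(α 0, k) + ⋯ + C(α (k-1), 1)` with
`α 0 > ⋯ > α (k-2) ≥ α (k-1) ≥ 1` and all coefficients at least `1`. -/
def fullKBinDecomp (k m : ℕ) (α : ℕ → ℕ) : Prop :=
  (∀ i, i + 1 ≤ k - 2 → α (i + 1) < α i) ∧ (2 ≤ k → α (k - 1) ≤ α (k - 2)) ∧
    (∀ i, i < k → 1 ≤ α i) ∧ m = ∑ i ∈ Finset.range k, (α i).choose (k - i)

/-- `(β 0, …, β (k-1))` is the shadow `k`-binomial decomposition of the family `S`: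
for every `0 ≤ i ≤ k-1`, `|∂^i S| = C(β 0, k-i) + C(β 1, k-1-i) + ⋯ + C(β (k-1), 1-i)`,
where generalized integer binomial coefficients are used. -/
def shadowDecomp {n : ℕ} (k : ℕ) (S : Finset (Finset (Fin n))) (β : ℕ → ℤ) : Prop :=
  ∀ i, i < k → ((Finset.shadow^[i] S).card : ℤ) =
    ∑ j ∈ Finset.range k, izchoose (β j) ((k : ℤ) - i - j)

/-- `S` is extremal for the Kruskal–Katona theorem: the cardinality of its lower shadow
equals the Kruskal–Katona lower bound determined by the `k`-binomial decomposition of `|S|`. -/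
def IsExtremal {n : ℕ} (k : ℕ) (S : Finset (Finset (Fin n))) : Prop :=
  ∃ t a, kBinDecomp k S.card t a ∧
    (Finset.shadow S).card = ∑ i ∈ Finset.range (t + 1), (a i).choose (k - 1 - i)

/-- `S` is an initial segment in the colexicographic order among `k`-subsets of `Fin n`. -/
def IsInitColex (n k : ℕ) (S : Finset (Finset (Fin n))) : Prop :=
  (∀ s ∈ S, s.card = k) ∧
    ∀ s ∈ S, ∀ t : Finset (Fin n), t.card = k → toColex t < toColex s → t ∈ S


open Finset.Colex

namespace KKAux

variable {n : ℕ}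

/-- The set of `|s|`-sets strictly below `s` in colex. -/
def Flt (s : Finset (Fin n)) : Finset (Finset (Fin n)) :=
  univ.filter fun t => t.card = s.card ∧ toColex t < toColex s

lemma mem_Flt {s t : Finset (Fin n)} :
    t ∈ Flt s ↔ t.card = s.card ∧ toColex t < toColex s := by
  simp [Flt]

lemma card_initSeg (s : Finset (Fin n)) : (initSeg s).card = (Flt s).card + 1 := by
  have h : initSeg s = insert s (Flt s) := by
    ext u
    simp only [mem_initSeg, mem_insert, mem_Flt]
    constructor
    · rintro ⟨hc, hle⟩
      rcases hle.lt_or_eq with h | h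
      · exact Or.inr ⟨hc.symm, h⟩
      · exact Or.inl (toColex_inj.1 h)
    · rintro (rfl | ⟨hc, hlt⟩)
      · exact ⟨rfl, le_rfl⟩
      · exact ⟨hc.symm, hlt.le⟩
  rw [h, card_insert_of_notMem]
  intro hmem
  exact lt_irrefl _ (mem_Flt.1 hmem).2

lemma card_Flt_insert (s : Finset (Fin n)) (m : Fin n) (hm : ∀ x ∈ s, x < m) :
    (Flt (insert m s)).card = (m : ℕ).choose (s.card + 1) + (Flt s).card := by
  classical
  have hms : m ∉ s := fun h => lt_irrefl m (hm m h)
  have hcard : (insert m s).card = s.card + 1 := card_insert_of_notMem hms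
  have hins : ∀ v : Finset (Fin n), m ∉ v →
      (toColex (insert m v) < toColex (insert m s) ↔ toColex v < toColex s) := by
    intro v hv
    rw [← toColex_sdiff_lt_toColex_sdiff (u := {m}) (by simp) (by simp),
      sdiff_singleton_eq_erase, sdiff_singleton_eq_erase, erase_insert hv, erase_insert hms]
  have key : Flt (insert m s) =
      powersetCard (s.card + 1) (Iio m) ∪ (Flt s).image (insert m) := by
    ext u
    simp only [mem_Flt, mem_union, mem_powersetCard, mem_image, hcard]
    constructor
    · rintro ⟨hu, hlt⟩
      by_cases hmu : m ∈ u
      · right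
        refine ⟨u.erase m, ⟨?_, ?_⟩, insert_erase hmu⟩
        · rw [card_erase_of_mem hmu, hu]
          omega
        · rw [← hins _ (notMem_erase _ _), insert_erase hmu]
          exact hlt
      · left
        refine ⟨fun x hx => mem_Iio.2 ?_, hu⟩
        have hle : ∀ b ∈ insert m s, b ≤ m := by
          intro b hb
          rcases mem_insert.1 hb with rfl | hb
          · exact le_rfl
          · exact (hm b hb).le
        exact lt_of_le_of_ne (forall_le_mono hlt.le hle x hx)
          (ne_of_mem_of_not_mem hx hmu)
    · rintro (⟨husub, hucard⟩ | ⟨v, hv, rfl⟩)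
      · refine ⟨hucard, ?_⟩
        rw [toColex_lt_toColex_iff_exists_forall_lt]
        exact ⟨m, mem_insert_self _ _, fun h => absurd (mem_Iio.1 (husub h)) (lt_irrefl m),
          fun b hb _ => mem_Iio.1 (husub hb)⟩
      · obtain ⟨hvcard, hvlt⟩ := hv
        have hmv : m ∉ v := fun h => lt_irrefl m (forall_lt_mono hvlt.le hm m h)
        exact ⟨by rw [card_insert_of_notMem hmv, hvcard], (hins v hmv).2 hvlt⟩
  have hdisj : Disjoint (powersetCard (s.card + 1) (Iio m)) ((Flt s).image (insert m)) := by
    rw [disjoint_left]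
    rintro u hu hu'
    obtain ⟨v, hv, rfl⟩ := mem_image.1 hu'
    exact absurd (mem_Iio.1 ((mem_powersetCard.1 hu).1 (mem_insert_self m v))) (lt_irrefl m)
  have hinj : Set.InjOn (insert m) (Flt s : Set (Finset (Fin n))) := by
    intro v₁ h₁ v₂ h₂ h
    rw [mem_coe] at h₁ h₂
    have hm₁ : m ∉ v₁ := fun h' => lt_irrefl m (forall_lt_mono (mem_Flt.1 h₁).2.le hm m h')
    have hm₂ : m ∉ v₂ := fun h' => lt_irrefl m (forall_lt_mono (mem_Flt.1 h₂).2.le hm m h')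
    rw [← erase_insert hm₁, ← erase_insert hm₂, h]
  rw [key, card_union_of_disjoint hdisj, card_powersetCard, Fin.card_Iio,
    card_image_of_injOn hinj]

lemma Flt_empty : (Flt (∅ : Finset (Fin n))).card = 0 := by
  rw [card_eq_zero]
  ext t
  simp only [mem_Flt, notMem_empty, iff_false, not_and]
  intro _
  rw [toColex_empty]
  exact not_lt_bot

lemma card_Flt_image (r : ℕ) (f : ℕ → Fin n)
    (hf : ∀ i j, i < j → j < r → f j < f i) :
    (Flt ((range r).image f)).card = ∑ j ∈ range r, ((f j : ℕ)).choose (r - j) := by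
  induction r generalizing f with
  | zero => simpa using Flt_empty
  | succ r ih =>
    have himg : (range (r + 1)).image f
        = insert (f 0) ((range r).image fun j => f (j + 1)) := by
      ext x
      simp only [mem_image, mem_range, mem_insert]
      constructor
      · rintro ⟨j, hj, rfl⟩
        rcases Nat.eq_zero_or_pos j with rfl | hj0
        · exact Or.inl rfl
        · exact Or.inr ⟨j - 1, by omega, by rw [Nat.sub_add_cancel hj0]⟩
      · rintro (rfl | ⟨j, hj, rfl⟩)
        · exact ⟨0, Nat.succ_pos _, rfl⟩
        · exact ⟨j + 1, by omega, rfl⟩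
    have hlt : ∀ x ∈ (range r).image fun j => f (j + 1), x < f 0 := by
      intro x hx
      obtain ⟨j, hj, rfl⟩ := mem_image.1 hx
      exact hf 0 (j + 1) (Nat.succ_pos _) (by have := mem_range.1 hj; omega)
    have hcards : ((range r).image fun j => f (j + 1)).card = r := by
      rw [card_image_of_injOn, card_range]
      intro i hi j hj hij
      simp only [coe_range, Set.mem_Iio] at hi hj
      by_contra hne
      rcases Nat.lt_or_ge i j with h | h
      · exact absurd hij (hf (i + 1) (j + 1) (by omega) (by omega)).ne'
      · exact absurd hij (hf (j + 1) (i + 1) (by omega) (by omega)).ne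
    rw [himg, card_Flt_insert _ _ hlt, hcards,
      ih (fun j => f (j + 1)) (fun i j hij hj => hf (i + 1) (j + 1) (by omega) (by omega)),
      Finset.sum_range_succ']
    simp only [Nat.succ_sub_succ, Nat.sub_zero]
    omega


lemma telescope : ∀ v b : ℕ, v ≤ b →
    b.choose v = ∑ l ∈ range v, (b - l - 1).choose (v - l) + 1 := by
  intro v
  induction v with
  | zero => intro b _; simp
  | succ v ih =>
    intro b hvb
    obtain ⟨c, rfl⟩ : ∃ c, b = c + 1 := ⟨b - 1, by omega⟩
    rw [Finset.sum_range_succ']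
    have h1 : ∀ l ∈ range v,
        (c + 1 - (l + 1) - 1).choose (v + 1 - (l + 1)) = (c - l - 1).choose (v - l) := by
      intro l _
      congr 1 <;> omega
    rw [Finset.sum_congr rfl h1]
    have h2 := ih c (by omega)
    have h3 : (c + 1).choose (v + 1) = c.choose v + c.choose (v + 1) :=
      Nat.choose_succ_succ _ _
    simp only [Nat.sub_zero, Nat.add_sub_cancel]
    omega

lemma min'_image_range (r : ℕ) (f : ℕ → Fin n)
    (hf : ∀ i j, i < j → j < r + 1 → f j < f i)
    (h : ((range (r + 1)).image f).Nonempty) :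
    ((range (r + 1)).image f).min' h = f r := by
  apply le_antisymm
  · exact min'_le _ _ (mem_image_of_mem f (mem_range.2 (lt_add_one r)))
  · apply le_min'
    intro y hy
    obtain ⟨j, hj, rfl⟩ := mem_image.1 hy
    rcases eq_or_lt_of_le (Nat.lt_succ_iff.1 (mem_range.1 hj)) with rfl | hlt
    · exact le_rfl
    · exact (hf j r hlt (lt_add_one r)).le

lemma erase_image_range (r : ℕ) (f : ℕ → Fin n)
    (hf : ∀ i j, i < j → j < r + 1 → f j < f i) (inst : DecidableEq (Fin n)) :
    @Finset.erase _ inst ((range (r + 1)).image f) (f r) = (range r).image f := by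
  ext x
  simp only [mem_erase, mem_image, mem_range]
  constructor
  · rintro ⟨hne, j, hj, rfl⟩
    refine ⟨j, lt_of_le_of_ne (Nat.lt_succ_iff.1 hj) fun h => hne (by rw [h]), rfl⟩
  · rintro ⟨j, hj, rfl⟩
    exact ⟨(hf j r hj (lt_add_one r)).ne', j, by omega, rfl⟩

lemma shadow_congr (i₁ i₂ : DecidableEq (Fin n)) (A : Finset (Finset (Fin n))) :
    @Finset.shadow _ i₁ A = @Finset.shadow _ i₂ A := by
  have h : i₁ = i₂ := by funext a b; exact Subsingleton.elim _ _
  subst h; rfl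

lemma iter_shadow_congr {i₁ : DecidableEq (Fin n)} (i₂ : DecidableEq (Fin n)) (m : ℕ) (A : Finset (Finset (Fin n))) :
    (@Finset.shadow _ i₁)^[m] A = (@Finset.shadow _ i₂)^[m] A := by
  have h : i₁ = i₂ := by funext a b; exact Subsingleton.elim _ _
  subst h; rfl

lemma erase_congr (i₁ i₂ : DecidableEq (Fin n)) (s : Finset (Fin n)) (x : Fin n) :
    @Finset.erase _ i₁ s x = @Finset.erase _ i₂ s x := by
  have h : i₁ = i₂ := by funext a b; exact Subsingleton.elim _ _
  subst h; rfl

lemma iterate_initSeg (k : ℕ) (f : ℕ → Fin n)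
    (hf : ∀ i j, i < j → j < k → f j < f i) :
    ∀ i, i ≤ k → Finset.shadow^[i] (initSeg ((range k).image f))
      = initSeg ((range (k - i)).image f) := by
  intro i
  induction i with
  | zero => intro _; simp
  | succ i ih =>
    intro hik
    rw [Function.iterate_succ_apply', ih (by omega)]
    obtain ⟨r, hr⟩ : ∃ r, k - i = r + 1 := ⟨k - i - 1, by omega⟩
    rw [hr, show k - (i + 1) = r by omega]
    have hf' : ∀ i' j, i' < j → j < r + 1 → f j < f i' := fun i' j h1 h2 =>
      hf i' j h1 (by omega)
    have hne : ((range (r + 1)).image f).Nonempty :=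
      ⟨f 0, mem_image_of_mem f (mem_range.2 (by omega))⟩
    have hsi := Finset.Colex.shadow_initSeg hne
    rw [min'_image_range r f hf' hne] at hsi
    refine (shadow_congr _ _ _).trans (hsi.trans (congrArg initSeg
      (Eq.trans (erase_congr _ (instDecidableEqFin n) _ _)
        (erase_image_range r f hf' (instDecidableEqFin n)))))

end KKAux


namespace KKAux

lemma izchoose_coe (x m : ℕ) : izchoose (x : ℤ) (m : ℤ) = (x.choose m : ℤ) := by
  unfold izchoose
  rw [if_neg (by exact_mod_cast not_lt.2 (Int.natCast_nonneg m)),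
    if_pos (Int.natCast_nonneg x)]
  simp

lemma izchoose_neg (x : ℤ) {z : ℤ} (h : z < 0) : izchoose x z = 0 := if_pos h

end KKAux

open KKAux Finset.Colex


/-- Kruskal–Katona theorem for iterated shadows. -/
theorem stmt2 (n k t : ℕ) (a : ℕ → ℕ) (S : Finset (Finset (Fin n)))
    (hk : 0 < k) (hS : ∀ s ∈ S, s.card = k) (hne : S.Nonempty)
    (hdec : kBinDecomp k S.card t a) :
    ∀ i, i ≤ k - 1 →
      ∑ j ∈ Finset.range (t + 1), izchoose (a j) ((k : ℤ) - i - j)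
        ≤ ((Finset.shadow^[i] S).card : ℤ) := by
  obtain ⟨htk, hadec, hat, hcard⟩ := hdec
  intro i hik
  have hik' : i < k := by omega
  obtain ⟨s₀, hs₀⟩ := hne
  have hkn : k ≤ n := by
    have h1 := hS s₀ hs₀
    have h2 : s₀.card ≤ n := by
      have := card_le_card (subset_univ s₀)
      simpa using this
    omega
  have hn0 : 0 < n := by omega
  have hchain : ∀ d j, j + d ≤ t → a (j + d) + d ≤ a j := by
    intro d
    induction d with
    | zero => intro j _; simp
    | succ d ih =>
      intro j h
      have h1 : a (j + 1 + d) + d ≤ a (j + 1) := ih (j + 1) (by omega)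
      have h2 : a (j + 1) < a j := hadec j (by omega)
      have h3 : j + (d + 1) = j + 1 + d := by omega
      rw [h3]; omega
  have halow : ∀ j, j ≤ t → k - j ≤ a j := by
    intro j hj
    have h1 := hchain (t - j) j (by omega)
    rw [show j + (t - j) = t by omega] at h1
    omega
  have hata0 : a t ≤ a 0 := by
    have h1 := hchain t 0 (by omega)
    rw [zero_add] at h1
    omega
  have hat1 : 1 ≤ a t := by have := halow t le_rfl; omega
  have hSub : S.card ≤ n.choose k := by
    have hsub : S ⊆ powersetCard k univ := fun s hs =>
      mem_powersetCard.2 ⟨subset_univ s, hS s hs⟩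
    calc S.card ≤ (powersetCard k (univ : Finset (Fin n))).card := card_le_card hsub
      _ = n.choose k := by rw [card_powersetCard, card_univ, Fintype.card_fin]
  have hmain : ∀ m, n < m → n.choose k < m.choose k := by
    intro m hm
    have h1 : (n + 1).choose k ≤ m.choose k := Nat.choose_le_choose _ (by omega)
    have hk' : k - 1 + 1 = k := by omega
    have h2 : (n + 1).choose (k - 1 + 1) = n.choose (k - 1) + n.choose (k - 1 + 1) :=
      Nat.choose_succ_succ _ _
    rw [hk'] at h2
    have h3 : 0 < n.choose (k - 1) := Nat.choose_pos (by omega)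
    omega
  have hterm : (a 0).choose k ≤ S.card := by
    rw [hcard]
    have h0 : 0 ∈ range (t + 1) := mem_range.2 (by omega)
    have := Finset.single_le_sum (f := fun j => (a j).choose (k - j))
      (fun j _ => Nat.zero_le _) h0
    simpa using this
  have ha0n : a 0 ≤ n ∧ (1 ≤ t → a 0 < n) := by
    constructor
    · by_contra hc
      push_neg at hc
      have := hmain (a 0) hc
      omega
    · intro ht1
      by_contra hc
      push_neg at hc
      have hterm2 : (a 0).choose k + (a 1).choose (k - 1) ≤ S.card := by
        rw [hcard]
        have hsub01 : ({0, 1} : Finset ℕ) ⊆ range (t + 1) := by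
          intro x hx
          simp only [mem_insert, mem_singleton] at hx
          rcases hx with rfl | rfl <;> exact mem_range.2 (by omega)
        have hp : ∑ j ∈ ({0, 1} : Finset ℕ), (a j).choose (k - j)
            = (a 0).choose k + (a 1).choose (k - 1) := by
          rw [Finset.sum_pair (by norm_num)]
          norm_num
        rw [← hp]
        exact Finset.sum_le_sum_of_subset hsub01
      have h1pos : 0 < (a 1).choose (k - 1) :=
        Nat.choose_pos (by have := halow 1 ht1; omega)
      have h2 : n.choose k ≤ (a 0).choose k := Nat.choose_le_choose _ hc
      omega
  set g : ℕ → ℕ := fun j => if j < t then a j else a t - (j - t) - 1 with hg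
  have hgn : ∀ j, j < k → g j < n := by
    intro j hj
    simp only [hg]
    split_ifs with h
    · have h1 := ha0n.2 (by omega)
      have h2 := hchain j 0 (by omega)
      rw [zero_add] at h2
      omega
    · rcases Nat.eq_zero_or_pos t with rfl | ht1
      · have := ha0n.1; omega
      · have := ha0n.2 ht1; omega
  have hgdec : ∀ p q, p < q → q < k → g q < g p := by
    intro p q hpq hqk
    simp only [hg]
    split_ifs with h1 h2 h2
    · have h3 := hchain (q - p) p (by omega)
      rw [show p + (q - p) = q by omega] at h3
      omega
    · omega
    · have h3 := hchain (t - p) p (by omega)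
      rw [show p + (t - p) = t by omega] at h3
      omega
    · omega
  set G : ℕ → Fin n := fun j => ⟨g j % n, Nat.mod_lt _ hn0⟩ with hG
  have hGval : ∀ j, j < k → (G j : ℕ) = g j := fun j hj => Nat.mod_eq_of_lt (hgn j hj)
  have hGdec : ∀ p q, p < q → q < k → G q < G p := by
    intro p q h1 h2
    have h3 := hgdec p q h1 h2
    simp only [hG, Fin.mk_lt_mk]
    rw [Nat.mod_eq_of_lt (hgn q h2), Nat.mod_eq_of_lt (hgn p (lt_trans h1 h2))]
    exact h3
  have NID : ∀ r, 1 ≤ r → r ≤ k →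
      ∑ j ∈ range r, (g j).choose (r - j) + 1
        = ∑ j ∈ range (min (t + 1) (r + 1)), (a j).choose (r - j) := by
    intro r h1 h2
    rcases le_or_gt r t with hrt | htr
    · rw [min_eq_right (by omega), Finset.sum_range_succ]
      have hc1 : ∀ j ∈ range r, (g j).choose (r - j) = (a j).choose (r - j) := by
        intro j hj
        have hjr := mem_range.1 hj
        simp only [hg]
        rw [if_pos (by omega)]
      rw [Finset.sum_congr rfl hc1, Nat.sub_self, Nat.choose_zero_right]
    · rw [min_eq_left (by omega)]
      have hsplit : ∑ j ∈ range r, (g j).choose (r - j)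
          = ∑ j ∈ range t, (g j).choose (r - j)
            + ∑ l ∈ range (r - t), (g (t + l)).choose (r - (t + l)) := by
        rw [range_eq_Ico, ← Finset.sum_Ico_consecutive _ (Nat.zero_le t) htr.le,
          ← range_eq_Ico, Finset.sum_Ico_eq_sum_range]
      have h3 : ∀ l ∈ range (r - t),
          (g (t + l)).choose (r - (t + l)) = (a t - l - 1).choose (r - t - l) := by
        intro l hl
        simp only [hg]
        rw [if_neg (by omega)]
        congr 1 <;> omega
      have h4 : ∀ j ∈ range t, (g j).choose (r - j) = (a j).choose (r - j) := by
        intro j hj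
        have hjt := mem_range.1 hj
        simp only [hg]
        rw [if_pos hjt]
      have h5 := telescope (r - t) (a t) (by omega)
      rw [Finset.sum_range_succ, hsplit, Finset.sum_congr rfl h3, Finset.sum_congr rfl h4]
      omega
  have hGinj : Set.InjOn G (range k) := by
    intro p hp q hq hpq
    simp only [coe_range, Set.mem_Iio] at hp hq
    by_contra hne'
    rcases Nat.lt_or_ge p q with h | h
    · exact absurd hpq (hGdec p q h hq).ne'
    · exact absurd hpq (hGdec q p (by omega) hp).ne
  have hcardS0 : ((range k).image G).card = k := by
    rw [card_image_of_injOn hGinj, card_range]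
  have h3seg : IsInitSeg (initSeg ((range k).image G)) k := by
    have := isInitSeg_initSeg (s := (range k).image G)
    rwa [hcardS0] at this
  have hsum_eq : ∀ r, 1 ≤ r → r ≤ k → (initSeg ((range r).image G)).card
      = ∑ j ∈ range (min (t + 1) (r + 1)), (a j).choose (r - j) := by
    intro r h1 h2
    rw [card_initSeg, card_Flt_image r G (fun p q hpq hq => hGdec p q hpq (by omega))]
    rw [← NID r h1 h2]
    congr 1
    apply Finset.sum_congr rfl
    intro j hj
    rw [hGval j (by have := mem_range.1 hj; omega)]
  have hCcard : (initSeg ((range k).image G)).card = S.card := by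
    rw [hsum_eq k (by omega) le_rfl, hcard, min_eq_left (by omega)]
  have hSized : (S : Set (Finset (Fin n))).Sized k := fun s hs => hS s hs
  have hKK := Finset.iterated_kk (k := i) hSized (le_of_eq hCcard) h3seg
  rw [iter_shadow_congr (instDecidableEqFin n) i (initSeg ((range k).image G)),
    iter_shadow_congr (instDecidableEqFin n) i S] at hKK
  have hiter := iterate_initSeg k G hGdec i (by omega)
  have hCcards : (Finset.shadow^[i] (initSeg ((range k).image G))).card
      = ∑ j ∈ range (min (t + 1) (k - i + 1)), (a j).choose (k - i - j) := by
    rw [hiter, hsum_eq (k - i) (by omega) (by omega)]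
  have hfinal : ∑ j ∈ Finset.range (t + 1), izchoose (a j) ((k : ℤ) - i - j)
      = ((∑ j ∈ range (min (t + 1) (k - i + 1)), (a j).choose (k - i - j) : ℕ) : ℤ) := by
    have hss : range (min (t + 1) (k - i + 1)) ⊆ range (t + 1) :=
      range_subset_range.2 (min_le_left _ _)
    have hzero : ∀ j ∈ range (t + 1), j ∉ range (min (t + 1) (k - i + 1)) →
        izchoose (a j) ((k : ℤ) - i - j) = 0 := by
      intro j hjt hjw
      have h1 := mem_range.1 hjt
      rw [mem_range, not_lt] at hjw
      have h2 : k - i + 1 ≤ j := by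
        rcases min_cases (t + 1) (k - i + 1) with ⟨hm, hm2⟩ | ⟨hm, hm2⟩ <;> omega
      apply izchoose_neg
      omega
    rw [← Finset.sum_subset hss hzero]
    rw [Nat.cast_sum]
    apply Finset.sum_congr rfl
    intro j hj
    have hjr : j ≤ k - i := by
      have h1 := mem_range.1 hj
      have h2 := min_le_right (t + 1) (k - i + 1)
      omega
    have hz : (k : ℤ) - i - j = ((k - i - j : ℕ) : ℤ) := by omega
    rw [hz, izchoose_coe]
  rw [hfinal]
  rw [hCcards] at hKK
  exact Nat.cast_le.2 hKK
end

section
/- The lower shadow of the initial segment of length m in the colexicographic order on k-subsets of [n] is again an initial segment in the colexicographic order on (k-1)-subsets. Consequently, if m = C(a_0,k)+...+C(a_t,k-t) is the k-binomial decomposition, then |∂ I_{n,k}(m)| = C(a_0,k-1)+...+C(a_t,k-t-1). -/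
open Finset

/-! ### Auxiliary lemmas -/

/-- The set of elements of `Fin n` with value `< c`. -/
def low (n c : ℕ) : Finset (Fin n) := Finset.univ.filter (fun x => (x : ℕ) < c)

lemma mem_low {n c : ℕ} {x : Fin n} : x ∈ low n c ↔ (x : ℕ) < c := by simp [low]

lemma card_low_le (n c : ℕ) : (low n c).card ≤ c := by
  classical
  calc (low n c).card = ((low n c).image Fin.val).card :=
        (Finset.card_image_of_injective _ Fin.val_injective).symm
  _ ≤ (Finset.range c).card := Finset.card_le_card (by
        intro x hx
        simp only [Finset.mem_image] at hx
        obtain ⟨y, hy, rfl⟩ := hx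
        simpa [Finset.mem_range] using mem_low.1 hy)
  _ = c := Finset.card_range c

lemma card_low (n c : ℕ) (h : c ≤ n) : (low n c).card = c := by
  classical
  have : low n c = (Finset.univ : Finset (Fin c)).map (Fin.castLEEmb h) := by
    ext x
    simp only [mem_low, Finset.mem_map, Finset.mem_univ, true_and]
    constructor
    · intro hx; exact ⟨⟨(x : ℕ), hx⟩, by ext; simp [Fin.castLEEmb]⟩
    · rintro ⟨y, rfl⟩; simpa [Fin.castLEEmb] using y.isLt
  rw [this, Finset.card_map, Finset.card_univ, Fintype.card_fin]

lemma choose_lt_choose' {n c k : ℕ} (hk : 1 ≤ k) (hkn : k ≤ n) (hnc : n < c) :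
    n.choose k < c.choose k := by
  have h1 : n.choose k < (n + 1).choose k := by
    obtain ⟨j, rfl⟩ : ∃ j, k = j + 1 := ⟨k - 1, by omega⟩
    rw [Nat.choose_succ_succ']
    have : 1 ≤ n.choose j := Nat.choose_pos (by omega)
    omega
  exact lt_of_lt_of_le h1 (Nat.choose_le_choose k hnc)

lemma shadow_powersetCard' {n : ℕ} (k : ℕ) (F : Finset (Fin n)) (hk : 1 ≤ k) (hkF : k ≤ F.card) :
    Finset.shadow (Finset.powersetCard k F) = Finset.powersetCard (k - 1) F := by
  ext u
  rw [Finset.mem_shadow_iff_insert_mem]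
  constructor
  · rintro ⟨x, hx, hins⟩
    rw [Finset.mem_powersetCard] at hins ⊢
    refine ⟨(Finset.subset_insert x u).trans hins.1, ?_⟩
    have := hins.2
    rw [Finset.card_insert_of_notMem hx] at this
    omega
  · intro hu
    rw [Finset.mem_powersetCard] at hu
    have hlt : u.card < F.card := by omega
    obtain ⟨x, hxF, hxu⟩ : ∃ x ∈ F, x ∉ u := by
      by_contra h
      push_neg at h
      exact absurd (Finset.card_le_card h) (by omega)
    refine ⟨x, hxu, ?_⟩
    rw [Finset.mem_powersetCard]
    refine ⟨Finset.insert_subset hxF hu.1, ?_⟩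
    rw [Finset.card_insert_of_notMem hxu]
    omega

lemma chain_ge {k t : ℕ} {a : ℕ → ℕ} (hchain : ∀ i, i < t → a (i + 1) < a i)
    (hat : k - t ≤ a t) : ∀ i ≤ t, k - i ≤ a i := by
  intro i hi
  obtain ⟨d, hd⟩ : ∃ d, i + d = t := ⟨t - i, by omega⟩
  induction d generalizing i with
  | zero => simpa [show i = t by omega] using hat
  | succ d ih =>
    have h1 := ih (i + 1) (by omega) (by omega)
    have h2 := hchain i (by omega)
    omega

lemma cascade_lt : ∀ (t k m : ℕ) (a : ℕ → ℕ), t + 1 ≤ k → (∀ i, i < t → a (i + 1) < a i) →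
    k - t ≤ a t → m = ∑ i ∈ Finset.range (t + 1), (a i).choose (k - i) →
    m < (a 0 + 1).choose k := by
  intro t
  induction t with
  | zero =>
    intro k m a hk _ hat hm
    simp only [Nat.zero_add, Finset.sum_range_one, Nat.sub_zero] at hm hat
    obtain ⟨j, rfl⟩ : ∃ j, k = j + 1 := ⟨k - 1, by omega⟩
    rw [Nat.choose_succ_succ']
    have : 1 ≤ (a 0).choose j := Nat.choose_pos (by omega)
    omega
  | succ t ih =>
    intro k m a hk hchain hat hm
    have ha0 : k ≤ a 0 := chain_ge hchain hat 0 (by omega)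
    have ha1 : a 1 + 1 ≤ a 0 := hchain 0 (by omega)
    have hsum : m = (∑ i ∈ Finset.range (t + 1), (a (i + 1)).choose (k - 1 - i))
        + (a 0).choose k := by
      rw [hm, Finset.sum_range_succ' (fun i => (a i).choose (k - i)) (t + 1)]
      simp only [Nat.sub_zero]
      congr 1
      apply Finset.sum_congr rfl
      intro i _
      congr 1
      omega
    have hlt : (∑ i ∈ Finset.range (t + 1), (a (i + 1)).choose (k - 1 - i))
        < (a 1 + 1).choose (k - 1) := by
      apply ih (k - 1) _ (fun i => a (i + 1)) (by omega) (fun i hi => hchain (i + 1) (by omega))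
      · show k - 1 - t ≤ a (t + 1); omega
      · rfl
    have hle : (a 1 + 1).choose (k - 1) ≤ (a 0).choose (k - 1) :=
      Nat.choose_le_choose _ (by omega)
    obtain ⟨j, hj⟩ : ∃ j, k = j + 1 := ⟨k - 1, by omega⟩
    subst hj
    rw [Nat.choose_succ_succ']
    simp only [Nat.add_sub_cancel] at hlt hle hsum
    omega

lemma pow_subset {n k c : ℕ} {S : Finset (Finset (Fin n))} (hS : IsInitColex n k S)
    {s : Finset (Fin n)} (hs : s ∈ S) {x : Fin n} (hx : x ∈ s) (hxc : c ≤ (x : ℕ)) :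
    Finset.powersetCard k (low n c) ⊆ S := by
  intro d hd
  rw [Finset.mem_powersetCard] at hd
  have hdlow : ∀ y ∈ d, (y : ℕ) < c := fun y hy => mem_low.1 (hd.1 hy)
  have hxd : x ∉ d := fun h => by have := hdlow x h; omega
  by_cases hds : d = s
  · exact hds ▸ hs
  apply hS.2 s hs d hd.2
  rw [Finset.Colex.toColex_lt_toColex_iff_exists_forall_lt]
  exact ⟨x, hx, hxd, fun b hb _ => by
    have := hdlow b hb
    exact Fin.lt_def.2 (by omega)⟩

lemma elements_le {n k c : ℕ} {S : Finset (Finset (Fin n))} (hS : IsInitColex n k S)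
    (hm : S.card < (c + 1).choose k) :
    ∀ s ∈ S, ∀ x ∈ s, (x : ℕ) ≤ c := by
  intro s hs x hx
  by_contra hxc
  push_neg at hxc
  have hcn : c + 1 ≤ n := by have := x.isLt; omega
  have hsub := pow_subset hS hs hx (show c + 1 ≤ (x : ℕ) by omega)
  set D := Finset.powersetCard k (low n (c + 1)) with hD
  have hsD : s ∉ D := by
    rw [hD, Finset.mem_powersetCard]
    rintro ⟨h1, -⟩
    have := mem_low.1 (h1 hx)
    omega
  have hcard : D.card = (c + 1).choose k := by
    rw [hD, Finset.card_powersetCard, card_low n (c + 1) hcn]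
  have : D.card + 1 ≤ S.card := by
    have h2 := Finset.card_le_card (Finset.insert_subset hs hsub)
    rwa [Finset.card_insert_of_notMem hsD] at h2
  omega

lemma kk_step {n k m c : ℕ} {S : Finset (Finset (Fin n))} (hk : 1 ≤ k) (hkc : k ≤ c)
    (hS : IsInitColex n k S) (hcard : S.card = m)
    (hlo : c.choose k < m) (hhi : m < (c + 1).choose k) :
    ∃ S' : Finset (Finset (Fin n)), IsInitColex n (k - 1) S' ∧
      S'.card = m - c.choose k ∧
      (Finset.shadow S).card = c.choose (k - 1) + (Finset.shadow S').card := by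
  classical
  have hle : ∀ s ∈ S, ∀ x ∈ s, (x : ℕ) ≤ c := elements_le hS (hcard ▸ hhi)
  obtain ⟨s₀, hs₀, x₀, hx₀, hx₀c⟩ : ∃ s ∈ S, ∃ x ∈ s, (x : ℕ) = c := by
    by_contra hcon
    push_neg at hcon
    have hsub : S ⊆ Finset.powersetCard k (low n c) := by
      intro s hs
      rw [Finset.mem_powersetCard]
      refine ⟨fun y hy => mem_low.2 ?_, hS.1 s hs⟩
      have h1 := hle s hs y hy
      have h2 := hcon s hs y hy
      omega
    have := Finset.card_le_card hsub
    rw [Finset.card_powersetCard] at this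
    have := Nat.choose_le_choose k (card_low_le n c)
    omega
  have hcn : c < n := by have := x₀.isLt; omega
  set e : Fin n := ⟨c, hcn⟩ with he
  have hB : Finset.powersetCard k (low n c) ⊆ S :=
    pow_subset hS hs₀ hx₀ (le_of_eq hx₀c.symm)
  set B := Finset.powersetCard k (low n c) with hBdef
  have hBcard : B.card = c.choose k := by
    rw [hBdef, Finset.card_powersetCard, card_low n c (by omega)]
  have heB : ∀ b ∈ B, e ∉ b := by
    intro b hb hcontra
    rw [hBdef, Finset.mem_powersetCard] at hb
    have := mem_low.1 (hb.1 hcontra)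
    simp [he] at this
  have hfilterB : S.filter (fun s => ¬ (e ∈ s)) = B := by
    ext s
    simp only [Finset.mem_filter]
    constructor
    · rintro ⟨hs, hes⟩
      rw [hBdef, Finset.mem_powersetCard]
      refine ⟨fun y hy => mem_low.2 ?_, hS.1 s hs⟩
      have h1 := hle s hs y hy
      rcases lt_or_eq_of_le h1 with h | h
      · exact h
      · exact absurd (show y = e from Fin.ext (by simp [he, h])) (fun hye => hes (hye ▸ hy))
    · intro hb
      exact ⟨hB hb, heB s hb⟩
  set Sa := S.filter (fun s => e ∈ s) with hSa
  have hSacard : Sa.card = m - c.choose k := by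
    have h := Finset.card_filter_add_card_filter_not (s := S) (p := fun s => e ∈ s)
    beta_reduce at h
    rw [hfilterB, ← hSa] at h
    omega
  set S' := Sa.image (fun s => s.erase e) with hS'
  have hmemS' : ∀ u : Finset (Fin n),
      u ∈ S' ↔ (∀ y ∈ u, (y : ℕ) < c) ∧ u.card = k - 1 ∧ insert e u ∈ S := by
    intro u
    rw [hS', Finset.mem_image]
    constructor
    · rintro ⟨s, hsSa, rfl⟩
      rw [hSa, Finset.mem_filter] at hsSa
      obtain ⟨hsS, hes⟩ := hsSa
      refine ⟨fun y hy => ?_, ?_, ?_⟩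
      · have h1 := hle s hsS y (Finset.mem_of_mem_erase hy)
        have h2 : y ≠ e := Finset.ne_of_mem_erase hy
        have : (y : ℕ) ≠ c := fun hc => h2 (Fin.ext (by simp [he, hc]))
        omega
      · rw [Finset.card_erase_of_mem hes, hS.1 s hsS]
      · rwa [Finset.insert_erase hes]
    · rintro ⟨hlt, hcard', hins⟩
      have heu : e ∉ u := fun h => by have := hlt e h; simp [he] at this
      exact ⟨insert e u, by rw [hSa, Finset.mem_filter]; exact ⟨hins, Finset.mem_insert_self e u⟩,
        by rw [Finset.erase_insert heu]⟩
  have hS'card : S'.card = m - c.choose k := by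
    rw [hS', Finset.card_image_of_injOn, hSacard]
    intro s₁ h₁ s₂ h₂ hval
    rw [Finset.mem_coe, hSa, Finset.mem_filter] at h₁ h₂
    have := congrArg (insert e) hval
    rwa [Finset.insert_erase h₁.2, Finset.insert_erase h₂.2] at this
  have hS'init : IsInitColex n (k - 1) S' := by
    constructor
    · intro u hu; exact ((hmemS' u).1 hu).2.1
    · intro v hv u hcard' hlt
      obtain ⟨hvlt, hvcard, hvins⟩ := (hmemS' v).1 hv
      have hult : ∀ y ∈ u, (y : ℕ) < c := by
        intro y hy
        exact Fin.lt_def.1 (Finset.Colex.forall_lt_mono (a := e) (le_of_lt hlt)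
          (fun b hb => Fin.lt_def.2 (by simpa [he] using hvlt b hb)) y hy)
      have heu : e ∉ u := fun h => by have := hult e h; simp [he] at this
      have hev : e ∉ v := fun h => by have := hvlt e h; simp [he] at this
      have h1 : (insert e u) \ {e} = u := by
        rw [Finset.sdiff_singleton_eq_erase, Finset.erase_insert heu]
      have h2 : (insert e v) \ {e} = v := by
        rw [Finset.sdiff_singleton_eq_erase, Finset.erase_insert hev]
      have hins : toColex (insert e u) < toColex (insert e v) := by
        refine (Finset.Colex.toColex_sdiff_lt_toColex_sdiff
          (Finset.singleton_subset_iff.2 (Finset.mem_insert_self e u))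
          (Finset.singleton_subset_iff.2 (Finset.mem_insert_self e v))).1 ?_
        rw [h1, h2]; exact hlt
      have hmem : insert e u ∈ S := by
        apply hS.2 (insert e v) hvins (insert e u)
          (by rw [Finset.card_insert_of_notMem heu]; omega) hins
      exact (hmemS' u).2 ⟨hult, hcard', hmem⟩
  have hshadmem : ∀ v ∈ Finset.shadow S', (e ∉ v ∧ ∀ y ∈ v, (y : ℕ) < c) := by
    intro v hv
    obtain ⟨u, hu, hvu⟩ := Finset.exists_subset_of_mem_shadow hv
    have := ((hmemS' u).1 hu).1
    exact ⟨fun h => by have := this e (hvu h); simp [he] at this,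
      fun y hy => this y (hvu hy)⟩
  have hshadow : Finset.shadow S =
      (Finset.powersetCard (k - 1) (low n c)) ∪ ((Finset.shadow S').image (insert e)) := by
    ext u
    rw [Finset.mem_shadow_iff_insert_mem, Finset.mem_union]
    constructor
    · rintro ⟨x, hxu, hins⟩
      by_cases hxe : x = e
      · rw [hxe] at hxu hins
        left
        rw [Finset.mem_powersetCard]
        constructor
        · intro y hy
          have h1 := hle _ hins y (Finset.mem_insert_of_mem hy)
          have h2 : y ≠ e := fun hyx => hxu (hyx ▸ hy)
          refine mem_low.2 ?_
          have : (y : ℕ) ≠ c := fun hc => h2 (Fin.ext (by simp [he, hc]))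
          omega
        · have := hS.1 _ hins
          rw [Finset.card_insert_of_notMem hxu] at this
          omega
      · by_cases heu : e ∈ u
        · right
          rw [Finset.mem_image]
          refine ⟨u.erase e, ?_, Finset.insert_erase heu⟩
          rw [Finset.mem_shadow_iff_insert_mem]
          refine ⟨x, fun h => hxu (Finset.mem_of_mem_erase h), ?_⟩
          rw [← Finset.erase_insert_of_ne hxe]
          apply (hmemS' _).2
          refine ⟨?_, ?_, ?_⟩
          · intro y hy
            have h1 := hle _ hins y (Finset.mem_of_mem_erase hy)
            have h2 : y ≠ e := Finset.ne_of_mem_erase hy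
            have : (y : ℕ) ≠ c := fun hc => h2 (Fin.ext (by simp [he, hc]))
            omega
          · rw [Finset.card_erase_of_mem (Finset.mem_insert_of_mem heu), hS.1 _ hins]
          · rwa [Finset.insert_erase (Finset.mem_insert_of_mem heu)]
        · left
          rw [Finset.mem_powersetCard]
          constructor
          · intro y hy
            have h1 := hle _ hins y (Finset.mem_insert_of_mem hy)
            have h2 : y ≠ e := fun hye => heu (hye ▸ hy)
            have : (y : ℕ) ≠ c := fun hc => h2 (Fin.ext (by simp [he, hc]))
            exact mem_low.2 (by omega)
          · have := hS.1 _ hins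
            rw [Finset.card_insert_of_notMem hxu] at this
            omega
    · rintro (hu | hu)
      · rw [Finset.mem_powersetCard] at hu
        obtain ⟨x, hx⟩ : ∃ x, x ∈ low n c \ u := by
          apply Finset.Nonempty.exists_mem
          rw [← Finset.card_pos]
          have h1 := Finset.le_card_sdiff u (low n c)
          rw [card_low n c (by omega)] at h1
          omega
        rw [Finset.mem_sdiff] at hx
        refine ⟨x, hx.2, hB ?_⟩
        rw [Finset.mem_powersetCard]
        exact ⟨Finset.insert_subset hx.1 hu.1,
          by rw [Finset.card_insert_of_notMem hx.2]; omega⟩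
      · obtain ⟨v, hv, rfl⟩ := Finset.mem_image.1 hu
        obtain ⟨hev, hvlt⟩ := hshadmem v hv
        obtain ⟨y, hyv, hins⟩ := Finset.mem_shadow_iff_insert_mem.1 hv
        obtain ⟨hylt, hycard, hyins⟩ := (hmemS' _).1 hins
        have hye : y ≠ e := by
          have := hylt y (Finset.mem_insert_self y v)
          intro hcon; rw [hcon] at this; simp [he] at this
        refine ⟨y, ?_, ?_⟩
        · simp only [Finset.mem_insert]
          rintro (h | h)
          · exact hye h
          · exact hyv h
        · rw [Finset.insert_comm]
          exact hyins
  have hdisj : Disjoint (Finset.powersetCard (k - 1) (low n c))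
      ((Finset.shadow S').image (insert e)) := by
    rw [Finset.disjoint_left]
    intro u hu hu'
    rw [Finset.mem_powersetCard] at hu
    obtain ⟨v, hv, rfl⟩ := Finset.mem_image.1 hu'
    have := mem_low.1 (hu.1 (Finset.mem_insert_self e v))
    simp [he] at this
  have himgcard : ((Finset.shadow S').image (insert e)).card = (Finset.shadow S').card := by
    apply Finset.card_image_of_injOn
    intro v₁ h₁ v₂ h₂ hval
    have he₁ := (hshadmem v₁ (by simpa using h₁)).1
    have he₂ := (hshadmem v₂ (by simpa using h₂)).1
    have := congrArg (fun s => Finset.erase s e) hval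
    simpa [Finset.erase_insert he₁, Finset.erase_insert he₂] using this
  refine ⟨S', hS'init, hS'card, ?_⟩
  rw [hshadow, Finset.card_union_of_disjoint hdisj, himgcard,
    Finset.card_powersetCard, card_low n c (by omega)]

lemma kk_base {n k c : ℕ} {S : Finset (Finset (Fin n))} (hk : 1 ≤ k) (hkc : k ≤ c)
    (hS : IsInitColex n k S)
    (hcard : S.card = c.choose k) (hhi : S.card < (c + 1).choose k) :
    (Finset.shadow S).card = c.choose (k - 1) := by
  classical
  have hpos : 1 ≤ S.card := hcard ▸ Nat.choose_pos hkc
  obtain ⟨s₀, hs₀⟩ := Finset.card_pos.1 hpos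
  have hkn : k ≤ n := by
    have h1 := Finset.card_le_univ s₀
    rw [hS.1 s₀ hs₀, Fintype.card_fin] at h1
    exact h1
  have hcn : c ≤ n := by
    by_contra h
    push_neg at h
    have h1 : S ⊆ Finset.powersetCard k Finset.univ := by
      intro s hs
      rw [Finset.mem_powersetCard]
      exact ⟨Finset.subset_univ s, hS.1 s hs⟩
    have h2 := Finset.card_le_card h1
    rw [Finset.card_powersetCard, Finset.card_univ, Fintype.card_fin] at h2
    have := choose_lt_choose' hk hkn h
    omega
  have hle := elements_le hS hhi
  have hSB : S ⊆ Finset.powersetCard k (low n c) := by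
    intro s hs
    rw [Finset.mem_powersetCard]
    refine ⟨fun y hy => mem_low.2 ?_, hS.1 s hs⟩
    have h1 := hle s hs y hy
    rcases lt_or_eq_of_le h1 with h | h
    · exact h
    · exfalso
      have hsub := pow_subset hS hs hy (le_of_eq h.symm)
      have hysB : s ∉ Finset.powersetCard k (low n c) := by
        rw [Finset.mem_powersetCard]
        rintro ⟨h2, -⟩
        have := mem_low.1 (h2 hy)
        omega
      have h3 := Finset.card_le_card (Finset.insert_subset hs hsub)
      rw [Finset.card_insert_of_notMem hysB, Finset.card_powersetCard,
        card_low n c hcn] at h3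
      omega
  have hSeq : S = Finset.powersetCard k (low n c) := by
    apply Finset.eq_of_subset_of_card_le hSB
    rw [Finset.card_powersetCard, card_low n c hcn, hcard]
  rw [hSeq, shadow_powersetCard' k _ hk (by rw [card_low n c hcn]; exact hkc),
    Finset.card_powersetCard, card_low n c hcn]

lemma main_card : ∀ (t : ℕ) {n k m : ℕ} (a : ℕ → ℕ) (S : Finset (Finset (Fin n))),
    0 < k → IsInitColex n k S → S.card = m → kBinDecomp k m t a →
    (Finset.shadow S).card = ∑ i ∈ Finset.range (t + 1), (a i).choose (k - 1 - i) := by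
  intro t
  induction t with
  | zero =>
    intro n k m a S hk hS hcard hdec
    obtain ⟨hk1, hchain, hat, hm⟩ := hdec
    simp only [Nat.zero_add, Finset.sum_range_one, Nat.sub_zero] at hm hat ⊢
    have hhi : m < (a 0 + 1).choose k :=
      cascade_lt 0 k m a hk1 hchain hat hm
    exact kk_base hk (by omega) hS (hcard.trans hm) (by rw [hcard]; exact hhi)
  | succ t ih =>
    intro n k m a S hk hS hcard hdec
    obtain ⟨hk1, hchain, hat, hm⟩ := hdec
    have ha0 : k ≤ a 0 := chain_ge hchain hat 0 (by omega)
    have hhi : m < (a 0 + 1).choose k := cascade_lt (t + 1) k m a hk1 hchain hat hm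
    have hsum : m = (∑ i ∈ Finset.range (t + 1), (a (i + 1)).choose (k - (i + 1)))
        + (a 0).choose k := by
      rw [hm, Finset.sum_range_succ' (fun i => (a i).choose (k - i)) (t + 1)]
      simp only [Nat.sub_zero]
    have hpos : 1 ≤ ∑ i ∈ Finset.range (t + 1), (a (i + 1)).choose (k - (i + 1)) := by
      have h1 : 1 ≤ (a (t + 1)).choose (k - (t + 1)) := Nat.choose_pos hat
      calc 1 ≤ (a (t + 1)).choose (k - (t + 1)) := h1
      _ ≤ _ := Finset.single_le_sum (f := fun i => (a (i + 1)).choose (k - (i + 1)))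
          (fun i _ => Nat.zero_le _) (Finset.self_mem_range_succ t)
    have hlo : (a 0).choose k < m := by omega
    obtain ⟨S', hS'init, hS'card, hshad⟩ :=
      kk_step (by omega) ha0 hS hcard hlo hhi
    have hdec' : kBinDecomp (k - 1) (m - (a 0).choose k) t (fun i => a (i + 1)) := by
      refine ⟨by omega, fun i hi => hchain (i + 1) (by omega), ?_, ?_⟩
      · show k - 1 - t ≤ a (t + 1); omega
      · rw [show m - (a 0).choose k
            = ∑ i ∈ Finset.range (t + 1), (a (i + 1)).choose (k - (i + 1)) by omega]
        apply Finset.sum_congr rfl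
        intro i _
        congr 1
        omega
    have hIH := ih (fun i => a (i + 1)) S' (by omega) hS'init hS'card hdec'
    rw [hshad, hIH, Finset.sum_range_succ' (fun i => (a i).choose (k - 1 - i)) (t + 1)]
    simp only [Nat.sub_zero]
    rw [add_comm]
    congr 1
    apply Finset.sum_congr rfl
    intro i _
    congr 1
    omega

/-- The shadow of an initial colex segment is an initial colex segment, and its
cardinality is given by the Kruskal–Katona bound. -/
theorem stmt5 (n k t m : ℕ) (a : ℕ → ℕ) (S : Finset (Finset (Fin n)))
    (hk : 0 < k) (hS : IsInitColex n k S) (hcard : S.card = m)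
    (hdec : kBinDecomp k m t a) :
    IsInitColex n (k - 1) (Finset.shadow S) ∧
      (Finset.shadow S).card = ∑ i ∈ Finset.range (t + 1), (a i).choose (k - 1 - i) := by
  constructor
  · have h1 : Finset.Colex.IsInitSeg S k :=
      ⟨fun s hs => hS.1 s (Finset.mem_coe.1 hs),
        fun s u hs hu => hS.2 s hs u hu.2 hu.1⟩
    have h2 := h1.shadow
    have hinst : ∀ (i1 i2 : DecidableEq (Fin n)),
        @Finset.shadow (Fin n) i1 S = @Finset.shadow (Fin n) i2 S := by
      intro i1 i2
      have : i1 = i2 := by funext a b; exact Subsingleton.elim _ _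
      rw [this]
    rw [hinst _ (instDecidableEqFin n)] at h2
    exact ⟨fun s hs => h2.1 (Finset.mem_coe.2 hs),
      fun s hs u hcardu hlt => h2.2 hs ⟨hlt, hcardu⟩⟩
  · exact main_card t a S hk hS hcard hdec
end

section
/- Let n ≥ k > 0 and 0 < m ≤ C(n,k) with k-binomial decomposition of length exactly k, say m = C(a_0,k)+...+C(a_{k-1},1), and suppose a_{k-1} < a_0 - k + 1. Then there exists a family S of k-subsets (of some ground set) with |S| = m that achieves equality in the Kruskal–Katona bound and is not isomorphic to the initial segment of length m in the colex order. -/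
open Finset

namespace KKNU

/-- Context bundling the parameters and arithmetic facts. -/
structure Ctx where
  k : ℕ
  a : ℕ → ℕ
  js : ℕ
  hk : 2 ≤ k
  hdecr : ∀ i, i + 1 < k → a (i+1) < a i
  hge : ∀ i, i < k → k - i ≤ a i
  hjs : js + 2 ≤ k
  hgapjs : a (js+1) + 2 ≤ a js
  hstair : ∀ i, i ≤ js → a i + i = a 0

namespace Ctx

variable (C : Ctx)

lemma anti : ∀ i j, i ≤ j → j < C.k → C.a j ≤ C.a i := by
  intro i j hij hj
  induction j with
  | zero => simp_all
  | succ j ih =>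
    rcases Nat.eq_or_lt_of_le hij with h | h
    · subst h; omega
    · have h1 := C.hdecr j hj
      have := ih (by omega) (by omega)
      omega

lemma strictanti : ∀ i j, i < j → j < C.k → C.a j < C.a i := by
  intro i j hij hj
  have h1 := C.hdecr i (by omega)
  have := C.anti (i+1) j (by omega) hj
  omega

lemma le_a0 (i : ℕ) (hi : i < C.k) : C.a i ≤ C.a 0 := C.anti 0 i (by omega) hi

lemma a_pos (i : ℕ) (hi : i < C.k) : 1 ≤ C.a i := by
  have := C.hge i hi; omega

/-- ground size -/
def n : ℕ := C.a 0 + 1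

lemma a0_lt_n : C.a 0 < C.n := by simp [n]

/-- element of `Fin n` with value `x` (for `x ≤ a 0`). -/
def fel (x : ℕ) : Fin C.n := ⟨min x (C.a 0), by have := C.a0_lt_n; omega⟩

lemma fel_val {x : ℕ} (hx : x ≤ C.a 0) : (C.fel x).val = x := by
  simp [fel, Nat.min_eq_left hx]

lemma fel_inj {x y : ℕ} (hx : x ≤ C.a 0) (hy : y ≤ C.a 0) (h : C.fel x = C.fel y) : x = y := by
  have := congrArg Fin.val h
  rw [C.fel_val hx, C.fel_val hy] at this; exact this

/-- initial interval of values `< c` -/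
def Iv (c : ℕ) : Finset (Fin C.n) := univ.filter (fun v => v.val < c)

@[simp] lemma mem_Iv {c : ℕ} {v : Fin C.n} : v ∈ C.Iv c ↔ v.val < c := by
  simp [Iv]

lemma Iv_card {c : ℕ} (hc : c ≤ C.n) : (C.Iv c).card = c := by
  classical
  have himg : (C.Iv c).image Fin.val = range c := by
    ext x
    simp only [mem_image, mem_Iv, mem_range]
    constructor
    · rintro ⟨v, hv, rfl⟩; exact hv
    · intro hx
      exact ⟨⟨x, by omega⟩, hx, rfl⟩
  have := Finset.card_image_of_injective (C.Iv c) Fin.val_injective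
  rw [himg] at this
  simpa using this.symm

/-- prefix set `{a 0, ..., a (j-1)}` as elements of `Fin n`. -/
def pre (j : ℕ) : Finset (Fin C.n) := (range j).image (fun i => C.fel (C.a i))

lemma mem_pre {j : ℕ} (hj : j ≤ C.k) {v : Fin C.n} :
    v ∈ C.pre j ↔ ∃ i < j, v.val = C.a i := by
  simp only [pre, mem_image, mem_range]
  constructor
  · rintro ⟨i, hi, rfl⟩
    exact ⟨i, hi, C.fel_val (C.le_a0 i (by omega))⟩
  · rintro ⟨i, hi, hv⟩
    refine ⟨i, hi, ?_⟩
    have : (C.fel (C.a i)).val = C.a i := C.fel_val (C.le_a0 i (by omega))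
    apply Fin.val_injective; rw [this, hv]

lemma pre_card {j : ℕ} (hj : j ≤ C.k) : (C.pre j).card = j := by
  rw [pre, Finset.card_image_of_injOn, card_range]
  intro i hi i' hi' h
  simp only [coe_range, Set.mem_Iio] at hi hi'
  have := C.fel_inj (C.le_a0 i (by omega)) (C.le_a0 i' (by omega)) h
  by_contra hne
  rcases Nat.lt_or_ge i i' with hlt | hge
  · exact absurd this (Nat.ne_of_gt (C.strictanti i i' hlt (by omega)))
  · exact absurd this.symm (Nat.ne_of_gt (C.strictanti i' i (by omega) (by omega)))

lemma pre_mono {j j' : ℕ} (h : j ≤ j') : C.pre j ⊆ C.pre j' := by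
  apply Finset.image_subset_image
  exact Finset.range_subset_range.2 h

lemma fel_a_mem_pre {i j : ℕ} (hij : i < j) : C.fel (C.a i) ∈ C.pre j := by
  simp only [pre, mem_image, mem_range]
  exact ⟨i, hij, rfl⟩

lemma disj_Iv_pre {j : ℕ} (hj : j < C.k) : Disjoint (C.Iv (C.a j)) (C.pre j) := by
  rw [Finset.disjoint_left]
  intro v hv hvp
  rw [C.mem_pre (by omega)] at hvp
  obtain ⟨i, hi, hvi⟩ := hvp
  rw [C.mem_Iv] at hv
  have := C.strictanti i j hi hj
  omega

/-- generic block: `pre j` together with an `r`-subset of `[a j]`. -/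
def blockG (j r : ℕ) : Finset (Finset (Fin C.n)) :=
  ((C.Iv (C.a j)).powersetCard r).image (fun A => A ∪ C.pre j)

lemma mem_blockG {j r : ℕ} {s : Finset (Fin C.n)} :
    s ∈ C.blockG j r ↔ ∃ A ⊆ C.Iv (C.a j), A.card = r ∧ s = A ∪ C.pre j := by
  simp only [blockG, mem_image, mem_powersetCard]
  constructor
  · rintro ⟨A, ⟨h1, h2⟩, rfl⟩; exact ⟨A, h1, h2, rfl⟩
  · rintro ⟨A, h1, h2, rfl⟩; exact ⟨A, ⟨h1, h2⟩, rfl⟩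

lemma card_of_mem_blockG {j r : ℕ} (hj : j < C.k) {s : Finset (Fin C.n)}
    (hs : s ∈ C.blockG j r) : s.card = r + j := by
  rw [C.mem_blockG] at hs
  obtain ⟨A, hA, hAc, rfl⟩ := hs
  rw [Finset.card_union_of_disjoint, hAc, C.pre_card (by omega)]
  exact Finset.disjoint_of_subset_left hA (C.disj_Iv_pre hj)

lemma blockG_card {j r : ℕ} (hj : j < C.k) :
    (C.blockG j r).card = (C.a j).choose r := by
  rw [blockG, Finset.card_image_of_injOn]
  · rw [Finset.card_powersetCard, C.Iv_card]
    have := C.le_a0 j hj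
    have := C.a0_lt_n
    omega
  · intro A hA A' hA' h
    simp only [Finset.mem_coe, Finset.mem_powersetCard] at hA hA'
    have d1 : Disjoint A (C.pre j) := Finset.disjoint_of_subset_left hA.1 (C.disj_Iv_pre hj)
    have d2 : Disjoint A' (C.pre j) := Finset.disjoint_of_subset_left hA'.1 (C.disj_Iv_pre hj)
    have := congrArg (fun t => t \ C.pre j) h
    simpa [Finset.union_sdiff_cancel_right d1, Finset.union_sdiff_cancel_right d2] using this

lemma pre_subset_of_mem_blockG {j r : ℕ} {s : Finset (Fin C.n)} (hs : s ∈ C.blockG j r) :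
    C.pre j ⊆ s := by
  rw [C.mem_blockG] at hs
  obtain ⟨A, _, _, rfl⟩ := hs
  exact Finset.subset_union_right

lemma felaj_not_mem_of_mem_blockG {j r : ℕ} (hj : j < C.k) {s : Finset (Fin C.n)}
    (hs : s ∈ C.blockG j r) : C.fel (C.a j) ∉ s := by
  rw [C.mem_blockG] at hs
  obtain ⟨A, hA, _, rfl⟩ := hs
  simp only [Finset.mem_union]
  push_neg
  constructor
  · intro hmem
    have := hA hmem
    rw [C.mem_Iv, C.fel_val (C.le_a0 j hj)] at this
    omega
  · intro hmem
    rw [C.mem_pre (by omega)] at hmem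
    obtain ⟨i, hi, hvi⟩ := hmem
    rw [C.fel_val (C.le_a0 j hj)] at hvi
    exact absurd hvi.symm (Nat.ne_of_gt (C.strictanti i j hi hj))

lemma val_lt_of_mem_blockG {j r : ℕ} (hj : j < C.k) {s : Finset (Fin C.n)}
    (hs : s ∈ C.blockG j r) {x : Fin C.n} (hx : x ∈ s) (hxp : x ∉ C.pre j) :
    x.val < C.a j := by
  rw [C.mem_blockG] at hs
  obtain ⟨A, hA, _, rfl⟩ := hs
  rcases Finset.mem_union.1 hx with h | h
  · have := hA h; rwa [C.mem_Iv] at this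
  · exact absurd h hxp

lemma blockG_disj {i j r r' : ℕ} (hij : i < j) (hj : j < C.k) :
    Disjoint (C.blockG i r) (C.blockG j r') := by
  rw [Finset.disjoint_left]
  intro s hsi hsj
  have h1 : C.fel (C.a i) ∉ s := C.felaj_not_mem_of_mem_blockG (by omega) hsi
  have h2 : C.fel (C.a i) ∈ s := C.pre_subset_of_mem_blockG hsj (C.fel_a_mem_pre hij)
  exact h1 h2

/-- member of blockG from explicit data -/
lemma mem_blockG_of {j r : ℕ} (hj : j < C.k) {s : Finset (Fin C.n)}
    (h1 : C.pre j ⊆ s) (h2 : ∀ x ∈ s, x ∉ C.pre j → x.val < C.a j)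
    (h3 : s.card = r + j) : s ∈ C.blockG j r := by
  rw [C.mem_blockG]
  refine ⟨s \ C.pre j, ?_, ?_, ?_⟩
  · intro x hx
    rw [Finset.mem_sdiff] at hx
    rw [C.mem_Iv]
    exact h2 x hx.1 hx.2
  · rw [Finset.card_sdiff_of_subset h1, C.pre_card (by omega), h3]; omega
  · rw [Finset.sdiff_union_of_subset h1]


lemma js_lt_k : C.js < C.k := by have := C.hjs; omega
lemma js1_lt_k : C.js + 1 < C.k := by have := C.hjs; omega

/-- `κ = k - js ≥ 2`. -/
def kap : ℕ := C.k - C.js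

lemma kap2 : 2 ≤ C.kap := by have := C.hjs; simp [kap]; omega

lemma d_ge : C.kap - 1 ≤ C.a (C.js+1) := by
  have := C.hge (C.js+1) C.js1_lt_k; simp [kap]; omega

lemma c_ge : C.kap + 1 ≤ C.a C.js := by
  have h1 := C.d_ge
  have h2 := C.hgapjs
  omega

lemma kap_le_n : C.kap ≤ C.n := by
  have h1 := C.c_ge
  have h2 := C.le_a0 C.js C.js_lt_k
  have := C.a0_lt_n
  omega

def Cstd : Finset (Finset (Fin C.n)) := (range C.k).biUnion (fun j => C.blockG j (C.k - j))
def SH : Finset (Finset (Fin C.n)) := (range C.k).biUnion (fun j => C.blockG j (C.k - 1 - j))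
def tS : Finset (Fin C.n) := C.Iv C.kap ∪ C.pre C.js
def yS : Finset (Fin C.n) := insert (C.fel (C.a (C.k-1))) (C.pre (C.k-1))
def S : Finset (Finset (Fin C.n)) := insert C.yS (C.Cstd.erase C.tS)

lemma biUnion_card_blocks (r : ℕ → ℕ) :
    ((range C.k).biUnion (fun j => C.blockG j (r j))).card
      = ∑ j ∈ range C.k, (C.a j).choose (r j) := by
  rw [Finset.card_biUnion]
  · exact Finset.sum_congr rfl (fun j hj => C.blockG_card (by simpa using hj))
  · intro i hi j hj hij
    simp only [coe_range, Set.mem_Iio] at hi hj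
    rcases Nat.lt_or_ge i j with h | h
    · exact C.blockG_disj h hj
    · exact (C.blockG_disj (by omega) hi).symm

lemma card_Cstd : C.Cstd.card = ∑ j ∈ range C.k, (C.a j).choose (C.k - j) :=
  C.biUnion_card_blocks _

lemma card_SH : C.SH.card = ∑ j ∈ range C.k, (C.a j).choose (C.k - 1 - j) :=
  C.biUnion_card_blocks _

lemma tS_mem_block : C.tS ∈ C.blockG C.js C.kap := by
  rw [C.mem_blockG]
  refine ⟨C.Iv C.kap, ?_, C.Iv_card C.kap_le_n, rfl⟩
  intro v hv
  rw [C.mem_Iv] at hv ⊢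
  have := C.c_ge
  omega

lemma tS_mem_Cstd : C.tS ∈ C.Cstd := by
  rw [Cstd, Finset.mem_biUnion]
  refine ⟨C.js, by simp [C.js_lt_k], ?_⟩
  have : C.k - C.js = C.kap := rfl
  rw [this]; exact C.tS_mem_block

lemma fel_b_not_mem_pre : C.fel (C.a (C.k-1)) ∉ C.pre (C.k-1) := by
  rw [C.mem_pre (by omega)]
  push_neg
  intro i hi
  rw [C.fel_val (C.le_a0 _ (by omega))]
  exact Nat.ne_of_lt (C.strictanti i (C.k-1) hi (by omega))

lemma yS_card : C.yS.card = C.k := by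
  rw [yS, Finset.card_insert_of_notMem C.fel_b_not_mem_pre, C.pre_card (by omega)]
  have := C.hk; omega

lemma fel_a_mem_yS {j : ℕ} (hj : j < C.k) : C.fel (C.a j) ∈ C.yS := by
  rw [yS, Finset.mem_insert]
  rcases Nat.lt_or_ge j (C.k-1) with h | h
  · exact Or.inr (C.fel_a_mem_pre h)
  · left; have hj1 : j = C.k - 1 := by omega
    rw [hj1]

lemma yS_not_mem_blockG {j r : ℕ} (hj : j < C.k) : C.yS ∉ C.blockG j r := by
  intro hmem
  exact C.felaj_not_mem_of_mem_blockG hj hmem (C.fel_a_mem_yS hj)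

lemma yS_not_mem_Cstd : C.yS ∉ C.Cstd := by
  rw [Cstd, Finset.mem_biUnion]
  push_neg
  intro j hj
  exact C.yS_not_mem_blockG (by simpa using hj)

lemma c_not_mem_tS : C.fel (C.a C.js) ∉ C.tS := by
  rw [tS, Finset.mem_union]
  push_neg
  constructor
  · rw [C.mem_Iv, C.fel_val (C.le_a0 _ C.js_lt_k)]
    have := C.c_ge; omega
  · rw [C.mem_pre (by have := C.js_lt_k; omega)]
    push_neg
    intro i hi
    rw [C.fel_val (C.le_a0 _ C.js_lt_k)]
    exact Nat.ne_of_lt (C.strictanti i C.js hi C.js_lt_k)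

lemma tS_ne_yS : C.tS ≠ C.yS := by
  intro h
  have h1 : C.fel (C.a C.js) ∈ C.yS := C.fel_a_mem_yS C.js_lt_k
  rw [← h] at h1
  exact C.c_not_mem_tS h1

lemma tS_not_mem_S : C.tS ∉ C.S := by
  rw [S, Finset.mem_insert]
  push_neg
  exact ⟨C.tS_ne_yS, Finset.notMem_erase _ _⟩

lemma card_S : C.S.card = ∑ j ∈ range C.k, (C.a j).choose (C.k - j) := by
  rw [S, Finset.card_insert_of_notMem, Finset.card_erase_of_mem C.tS_mem_Cstd, C.card_Cstd]
  · have hpos : 0 < C.Cstd.card := Finset.card_pos.2 ⟨C.tS, C.tS_mem_Cstd⟩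
    rw [C.card_Cstd] at hpos
    omega
  · intro h
    exact C.yS_not_mem_Cstd (Finset.mem_of_mem_erase h)

lemma sized_Cstd {s : Finset (Fin C.n)} (hs : s ∈ C.Cstd) : s.card = C.k := by
  rw [Cstd, Finset.mem_biUnion] at hs
  obtain ⟨j, hj, hmem⟩ := hs
  simp only [mem_range] at hj
  rw [C.card_of_mem_blockG hj hmem]
  omega

lemma sized_S {s : Finset (Fin C.n)} (hs : s ∈ C.S) : s.card = C.k := by
  rw [S, Finset.mem_insert] at hs
  rcases hs with rfl | hs
  · exact C.yS_card
  · exact C.sized_Cstd (Finset.mem_of_mem_erase hs)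


lemma pre_elem_eq {j : ℕ} (hj : j ≤ C.k) {y : Fin C.n} (hy : y ∈ C.pre j) :
    ∃ l < j, y = C.fel (C.a l) := by
  rw [C.mem_pre hj] at hy
  obtain ⟨l, hl, hv⟩ := hy
  refine ⟨l, hl, ?_⟩
  apply Fin.val_injective
  rw [hv, C.fel_val (C.le_a0 l (by omega))]

lemma mem_SH_of {j : ℕ} (hj : j < C.k) {s : Finset (Fin C.n)}
    (hs : s ∈ C.blockG j (C.k - 1 - j)) : s ∈ C.SH := by
  rw [SH, Finset.mem_biUnion]
  exact ⟨j, by simp [hj], hs⟩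

/-- erasing any element of a `Cstd`-block lands in `SH`. -/
lemma erase_mem_SH {j : ℕ} (hj : j < C.k) {s : Finset (Fin C.n)}
    (hs : s ∈ C.blockG j (C.k - j)) {x : Fin C.n} (hx : x ∈ s) :
    s.erase x ∈ C.SH := by
  classical
  obtain ⟨A, hA, hAc, rfl⟩ := C.mem_blockG.1 hs
  have hdisj : Disjoint A (C.pre j) := Finset.disjoint_of_subset_left hA (C.disj_Iv_pre hj)
  rcases Finset.mem_union.1 hx with hxA | hxP
  · -- erase from the free part
    have hxp : x ∉ C.pre j := Finset.disjoint_left.1 hdisj hxA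
    have : (A ∪ C.pre j).erase x = (A.erase x) ∪ C.pre j := by
      rw [Finset.erase_union_distrib, Finset.erase_eq_of_notMem hxp]
    rw [this]
    apply C.mem_SH_of hj
    rw [C.mem_blockG]
    refine ⟨A.erase x, Finset.Subset.trans (Finset.erase_subset _ _) hA, ?_, rfl⟩
    rw [Finset.card_erase_of_mem hxA, hAc]
    omega
  · -- erase a prefix element `a i`
    obtain ⟨i, hij, rfl⟩ := C.pre_elem_eq (by omega) hxP
    apply C.mem_SH_of (show i < C.k by omega)
    apply C.mem_blockG_of (show i < C.k by omega)
    · intro y hy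
      rw [Finset.mem_erase]
      obtain ⟨l, hl, rfl⟩ := C.pre_elem_eq (by omega) hy
      constructor
      · intro heq
        have := C.fel_inj (C.le_a0 l (by omega)) (C.le_a0 i (by omega)) heq
        have := C.strictanti l i (by omega) (by omega)
        omega
      · exact Finset.mem_union_right _ (C.pre_mono (by omega) hy)
    · intro y hy hyp
      have hy' : y ∈ A ∪ C.pre j := Finset.mem_of_mem_erase hy
      have hyx : y ≠ C.fel (C.a i) := (Finset.mem_erase.1 hy).1
      rcases Finset.mem_union.1 hy' with h | h
      · have h1 : y.val < C.a j := by have := hA h; rwa [C.mem_Iv] at this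
        have := C.strictanti i j hij hj
        omega
      · obtain ⟨l, hl, rfl⟩ := C.pre_elem_eq (by omega) h
        have hli : l ≠ i := fun h => hyx (by rw [h])
        have hlnotlt : ¬ l < i := by
          intro hcon
          exact hyp (C.fel_a_mem_pre hcon)
        rw [C.fel_val (C.le_a0 l (by omega))]
        exact C.strictanti i l (by omega) (by omega)
    · have hc : (A ∪ C.pre j).card = (C.k - j) + j := by
        rw [Finset.card_union_of_disjoint hdisj, hAc, C.pre_card (by omega)]
      rw [Finset.card_erase_of_mem hx, hc]
      omega

/-- facets of `yS` are in `SH`. -/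
lemma erase_yS_mem_SH {x : Fin C.n} (hx : x ∈ C.yS) : C.yS.erase x ∈ C.SH := by
  classical
  rw [yS, Finset.mem_insert] at hx
  rcases hx with rfl | hxP
  · rw [yS, Finset.erase_insert C.fel_b_not_mem_pre]
    apply C.mem_SH_of (show C.k - 1 < C.k by have := C.hk; omega)
    apply C.mem_blockG_of (show C.k - 1 < C.k by have := C.hk; omega)
    · exact Finset.Subset.refl _
    · intro y hy hyp
      exact absurd hy hyp
    · rw [C.pre_card (by omega)]; omega
  · obtain ⟨i, hij, rfl⟩ := C.pre_elem_eq (by omega) hxP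
    apply C.mem_SH_of (show i < C.k by omega)
    apply C.mem_blockG_of (show i < C.k by omega)
    · intro y hy
      rw [Finset.mem_erase]
      obtain ⟨l, hl, rfl⟩ := C.pre_elem_eq (by omega) hy
      constructor
      · intro heq
        have := C.fel_inj (C.le_a0 l (by omega)) (C.le_a0 i (by omega)) heq
        have := C.strictanti l i (by omega) (by omega)
        omega
      · exact Finset.mem_insert_of_mem (C.pre_mono (by omega) hy)
    · intro y hy hyp
      have hy' : y ∈ C.yS := Finset.mem_of_mem_erase hy
      have hyx : y ≠ C.fel (C.a i) := (Finset.mem_erase.1 hy).1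
      rw [yS, Finset.mem_insert] at hy'
      rcases hy' with rfl | h
      · rw [C.fel_val (C.le_a0 _ (by omega))]
        exact C.strictanti i (C.k-1) (by omega) (by omega)
      · obtain ⟨l, hl, rfl⟩ := C.pre_elem_eq (by omega) h
        have hli : l ≠ i := fun h => hyx (by rw [h])
        have hlnotlt : ¬ l < i := by
          intro hcon
          exact hyp (C.fel_a_mem_pre hcon)
        rw [C.fel_val (C.le_a0 l (by omega))]
        exact C.strictanti i l (by omega) (by omega)
    · rw [Finset.card_erase_of_mem, C.yS_card]
      · omega
      · rw [yS]
        exact Finset.mem_insert_of_mem hxP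

lemma shadow_S_subset : C.S.shadow ⊆ C.SH := by
  intro t ht
  rw [Finset.mem_shadow_iff] at ht
  obtain ⟨s, hs, x, hx, rfl⟩ := ht
  rw [S, Finset.mem_insert] at hs
  rcases hs with rfl | hs
  · exact C.erase_yS_mem_SH hx
  · have hs' := Finset.mem_of_mem_erase hs
    rw [Cstd, Finset.mem_biUnion] at hs'
    obtain ⟨j, hj, hmem⟩ := hs'
    exact C.erase_mem_SH (by simpa using hj) hmem hx

lemma SH_subset_shadow : C.SH ⊆ C.S.shadow := by
  classical
  intro t ht
  rw [SH, Finset.mem_biUnion] at ht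
  obtain ⟨j, hj, hmem⟩ := ht
  simp only [mem_range] at hj
  obtain ⟨B, hB, hBc, rfl⟩ := C.mem_blockG.1 hmem
  -- candidates to extend
  have hcard : (C.k - 1 - j) + 1 ≤ (C.Iv (C.a j)).card := by
    rw [C.Iv_card (by have := C.le_a0 j hj; have := C.a0_lt_n; omega)]
    have := C.hge j hj
    omega
  have hne : (C.Iv (C.a j) \ B).Nonempty := by
    rw [← Finset.card_pos, Finset.card_sdiff_of_subset hB, hBc]
    omega
  obtain ⟨x, hx⟩ := hne
  rw [Finset.mem_sdiff] at hx
  have hxt : x ∉ B ∪ C.pre j := by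
    rw [Finset.mem_union]
    push_neg
    exact ⟨hx.2, Finset.disjoint_left.1 (C.disj_Iv_pre hj) hx.1⟩
  have hins : ∀ z, z ∈ C.Iv (C.a j) \ B → insert z (B ∪ C.pre j) ∈ C.blockG j (C.k - j) := by
    intro z hz
    rw [Finset.mem_sdiff] at hz
    rw [C.mem_blockG]
    refine ⟨insert z B, ?_, ?_, ?_⟩
    · intro w hw
      rcases Finset.mem_insert.1 hw with rfl | hw
      · exact hz.1
      · exact hB hw
    · rw [Finset.card_insert_of_notMem hz.2, hBc]
      omega
    · rw [Finset.insert_union]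
  rcases eq_or_ne (insert x (B ∪ C.pre j)) C.tS with heq | hne'
  · -- need a second candidate
    have h2 : 2 ≤ (C.Iv (C.a j) \ B).card := by
      have hjs' : j = C.js := by
        by_contra hne2
        have h1 : insert x (B ∪ C.pre j) ∈ C.blockG j (C.k - j) :=
          hins x (by rw [Finset.mem_sdiff]; exact hx)
        rw [heq] at h1
        have h2 := C.tS_mem_block
        rcases Nat.lt_or_ge j C.js with hlt | hge
        · exact Finset.disjoint_left.1 (C.blockG_disj hlt C.js_lt_k) h1 h2
        · exact Finset.disjoint_left.1 (C.blockG_disj (by omega) hj) h2 h1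
      rw [Finset.card_sdiff_of_subset hB, hBc, C.Iv_card (by have := C.le_a0 j hj; have := C.a0_lt_n; omega)]
      rw [hjs']
      have := C.c_ge
      have : C.k - 1 - C.js = C.kap - 1 := by simp [kap]; omega
      rw [this]
      have := C.kap2
      have := C.c_ge
      omega
    obtain ⟨x', hx', hxx'⟩ : ∃ x' ∈ C.Iv (C.a j) \ B, x' ≠ x := by
      obtain ⟨u, hu, v, hv, huv⟩ := Finset.one_lt_card.1 h2
      rcases eq_or_ne u x with rfl | h
      · exact ⟨v, hv, fun hc => huv hc.symm⟩
      · exact ⟨u, hu, h⟩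
    rw [Finset.mem_sdiff] at hx'
    have hx't : x' ∉ B ∪ C.pre j := by
      rw [Finset.mem_union]
      push_neg
      exact ⟨hx'.2, Finset.disjoint_left.1 (C.disj_Iv_pre hj) hx'.1⟩
    rw [Finset.mem_shadow_iff_insert_mem]
    refine ⟨x', hx't, ?_⟩
    have hmem2 : insert x' (B ∪ C.pre j) ∈ C.blockG j (C.k - j) :=
      hins x' (by rw [Finset.mem_sdiff]; exact hx')
    have hne3 : insert x' (B ∪ C.pre j) ≠ C.tS := by
      rw [← heq]
      intro hcon
      have : x' ∈ insert x (B ∪ C.pre j) := by rw [← hcon]; exact Finset.mem_insert_self _ _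
      rcases Finset.mem_insert.1 this with h | h
      · exact hxx' h
      · exact hx't h
    rw [S, Finset.mem_insert]
    right
    rw [Finset.mem_erase]
    refine ⟨hne3, ?_⟩
    rw [Cstd, Finset.mem_biUnion]
    exact ⟨j, by simp [hj], hmem2⟩
  · rw [Finset.mem_shadow_iff_insert_mem]
    refine ⟨x, hxt, ?_⟩
    rw [S, Finset.mem_insert]
    right
    rw [Finset.mem_erase]
    refine ⟨hne', ?_⟩
    rw [Cstd, Finset.mem_biUnion]
    exact ⟨j, by simp [hj], hins x (by rw [Finset.mem_sdiff]; exact hx)⟩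

lemma shadow_S : C.S.shadow = C.SH :=
  Finset.Subset.antisymm C.shadow_S_subset C.SH_subset_shadow

lemma card_shadow_S : C.S.shadow.card = ∑ j ∈ range C.k, (C.a j).choose (C.k - 1 - j) := by
  rw [C.shadow_S, C.card_SH]


lemma d1_le_a0 : C.a (C.js+1) + 1 ≤ C.a 0 := by
  have h1 := C.hgapjs
  have h2 := C.le_a0 C.js C.js_lt_k
  omega

lemma fel_d1_not_mem_pre {j : ℕ} (hj : j ≤ C.k) : C.fel (C.a (C.js+1) + 1) ∉ C.pre j := by
  rw [C.mem_pre hj]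
  push_neg
  intro i hi
  rw [C.fel_val C.d1_le_a0]
  rcases Nat.lt_or_ge i (C.js+1) with h | h
  · have := C.anti i C.js (by omega) C.js_lt_k
    have := C.hgapjs
    omega
  · have := C.anti (C.js+1) i h (by omega)
    omega

/-- The key witness: for every vertex outside the prefix, some `k`-set avoiding it is missing. -/
lemma missing_avoiding (v : Fin C.n) (hv : v ∉ C.pre C.js) :
    ∃ s : Finset (Fin C.n), s.card = C.k ∧ s ∉ C.S ∧ v ∉ s := by
  classical
  by_cases hvt : v ∈ C.tS
  · -- v has value < κ ; build the special witness
    have hvk : v.val < C.kap := by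
      rcases Finset.mem_union.1 hvt with h | h
      · rwa [C.mem_Iv] at h
      · exact absurd h hv
    set d := C.a (C.js+1) with hd
    have hdk : C.kap - 1 ≤ d := C.d_ge
    have hd1 : d + 1 ≤ C.a 0 := C.d1_le_a0
    have hc : C.kap + 1 ≤ C.a C.js := C.c_ge
    -- part ⊆ Iv d minus v, of size κ - 2
    obtain ⟨part, hpsub, hpcard⟩ : ∃ part ⊆ (C.Iv d).erase v, part.card = C.kap - 2 := by
      apply Finset.exists_subset_card_eq
      have h1 : d ≤ C.n := by have := C.a0_lt_n; omega
      have h2 := C.Iv_card h1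
      have h3 := C.kap2
      by_cases hvd : v ∈ C.Iv d
      · rw [Finset.card_erase_of_mem hvd, h2]; omega
      · rw [Finset.erase_eq_of_notMem hvd, h2]; omega
    have hpart_val : ∀ y ∈ part, y.val < d ∧ y ≠ v := by
      intro y hy
      have := hpsub hy
      rw [Finset.mem_erase, C.mem_Iv] at this
      exact ⟨this.2, this.1⟩
    set W : Finset (Fin C.n) := insert (C.fel (d+1)) part with hW
    set s : Finset (Fin C.n) := W ∪ C.pre (C.js+1) with hs
    have hd1mem : C.fel (d+1) ∈ s := Finset.mem_union_left _ (Finset.mem_insert_self _ _)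
    have hd1val : (C.fel (d+1)).val = d + 1 := C.fel_val hd1
    have hWd : C.fel (d+1) ∉ part := by
      intro h
      have := (hpart_val _ h).1
      rw [hd1val] at this
      omega
    have hWcard : W.card = C.kap - 1 := by
      rw [hW, Finset.card_insert_of_notMem hWd, hpcard]
      have := C.kap2
      omega
    have hWpre : Disjoint W (C.pre (C.js+1)) := by
      rw [Finset.disjoint_left]
      intro y hyW hyP
      obtain ⟨i, hi, rfl⟩ := C.pre_elem_eq (by have := C.hjs; omega) hyP
      have hvali : (C.fel (C.a i)).val = C.a i := C.fel_val (C.le_a0 i (by have := C.hjs; omega))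
      have hige : d + 2 ≤ C.a i := by
        have := C.anti i C.js (by omega) C.js_lt_k
        have := C.hgapjs
        omega
      rcases Finset.mem_insert.1 hyW with h | h
      · have := congrArg Fin.val h
        rw [hvali, hd1val] at this
        omega
      · have := (hpart_val _ h).1
        rw [hvali] at this
        omega
    refine ⟨s, ?_, ?_, ?_⟩
    · rw [hs, Finset.card_union_of_disjoint hWpre, hWcard, C.pre_card (by have := C.hjs; omega)]
      have h2 := C.kap2
      have h3 : C.kap = C.k - C.js := rfl
      have h4 := C.hjs
      omega
    · -- s ∉ S
      rw [S, Finset.mem_insert]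
      push_neg
      constructor
      · -- s ≠ yS since fel (d+1) ∈ s but not in yS
        intro heq
        have : C.fel (d+1) ∈ C.yS := heq ▸ hd1mem
        rw [yS, Finset.mem_insert] at this
        rcases this with h | h
        · have := congrArg Fin.val h
          rw [hd1val, C.fel_val (C.le_a0 _ (by have := C.hk; omega))] at this
          have := C.anti (C.js+1) (C.k-1) (by have := C.hjs; omega) (by have := C.hk; omega)
          omega
        · exact C.fel_d1_not_mem_pre (by omega) h
      · -- s ∉ Cstd.erase tS
        intro hmem
        have hmem' := Finset.mem_of_mem_erase hmem
        rw [Cstd, Finset.mem_biUnion] at hmem'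
        obtain ⟨j, hj, hblk⟩ := hmem'
        simp only [mem_range] at hj
        rcases Nat.lt_or_ge j (C.js+1) with hjlt | hjge
        · exact C.felaj_not_mem_of_mem_blockG hj hblk
            (Finset.mem_union_right _ (C.fel_a_mem_pre hjlt))
        · have htv := C.val_lt_of_mem_blockG hj hblk hd1mem (C.fel_d1_not_mem_pre (by omega))
          rw [hd1val] at htv
          have hanti := C.anti (C.js+1) j hjge hj
          omega
    · -- v ∉ s
      rw [hs, Finset.mem_union, hW]
      push_neg
      refine ⟨?_, ?_⟩
      · rw [Finset.mem_insert]
        push_neg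
        constructor
        · intro h
          have := congrArg Fin.val h
          rw [hd1val] at this
          omega
        · intro h
          exact (hpart_val _ h).2 rfl
      · intro h
        obtain ⟨i, hi, rfl⟩ := C.pre_elem_eq (by have := C.hjs; omega) h
        have hvali : (C.fel (C.a i)).val = C.a i := C.fel_val (C.le_a0 i (by have := C.hjs; omega))
        have : d + 2 ≤ C.a i := by
          have := C.anti i C.js (by omega) C.js_lt_k
          have := C.hgapjs
          omega
        omega
  · exact ⟨C.tS, C.sized_Cstd C.tS_mem_Cstd, C.tS_not_mem_S, hvt⟩

/-- staircase complement: values distinct from `a 0, …, a l` are below `a l`. -/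
lemma staircase_lt {l : ℕ} (hl : l ≤ C.js) (x : Fin C.n)
    (h1 : ∀ i, i < l → x.val ≠ C.a i) (h2 : x.val ≠ C.a l) : x.val < C.a l := by
  by_contra hge
  push_neg at hge
  have hx0 : x.val ≤ C.a 0 := by
    have := x.isLt
    simp only [n] at this
    omega
  have hstl := C.hstair l hl
  have hlt : C.a l < x.val := by omega
  set i := C.a 0 - x.val with hi
  have hil : i < l := by omega
  have hsti := C.hstair i (by omega)
  exact (h1 i hil) (by omega)

/-- The A-side: a colex-downward-closed family of the right size contains the staircase
prefix elements in every missing set. -/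
lemma Aside (A : Finset (Finset (Fin C.n)))
    (hsz : ∀ s ∈ A, s.card = C.k)
    (hcl : ∀ s ∈ A, ∀ t : Finset (Fin C.n), t.card = C.k →
      toColex t < toColex s → t ∈ A)
    (hcard : A.card = ∑ j ∈ range C.k, (C.a j).choose (C.k - j)) :
    ∀ s : Finset (Fin C.n), s.card = C.k → s ∉ A → ∀ l, l ≤ C.js → C.fel (C.a l) ∈ s := by
  classical
  intro s hscard hsA l
  induction l using Nat.strong_induction_on with
  | _ l IH =>
  intro hl
  by_contra hnot
  have hpre : C.pre l ⊆ s := by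
    intro y hy
    obtain ⟨i, hi, rfl⟩ := C.pre_elem_eq (by have := C.hjs; omega) hy
    exact IH i hi (by omega)
  -- A is contained in the strict colex initial piece below s
  set T : Finset (Finset (Fin C.n)) :=
    (univ.powersetCard C.k).filter
      (fun t => toColex t < toColex s) with hT
  have hAT : A ⊆ T := by
    intro t htA
    rw [hT, Finset.mem_filter]
    refine ⟨Finset.mem_powersetCard_univ.2 (hsz t htA), ?_⟩
    rcases lt_trichotomy (toColex t) (toColex s) with h | h | h
    · exact h
    · exact absurd (toColex_inj.1 h ▸ htA) hsA
    · exact absurd (hcl t htA s hscard h) hsA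
  -- T is contained in the union of blocks 0..l minus {s}
  set U : Finset (Finset (Fin C.n)) :=
    ((range (l+1)).biUnion (fun i => C.blockG i (C.k - i))).erase s with hU
  have hTU : T ⊆ U := by
    intro t htT
    rw [hT, Finset.mem_filter, Finset.mem_powersetCard_univ] at htT
    obtain ⟨htk, hlt⟩ := htT
    have htns : t ≠ s := fun h => absurd (h ▸ hlt) (lt_irrefl _)
    by_cases hex : ∃ i, i ≤ l ∧ C.fel (C.a i) ∉ t
    · have hdp : DecidablePred (fun i => i ≤ l ∧ C.fel (C.a i) ∉ t) := Classical.decPred _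
      set i0 := @Nat.find _ hdp hex with hi0
      have hfind := @Nat.find_spec _ hdp hex
      have hmin := fun j (hj : j < i0) => @Nat.find_min _ hdp hex j hj
      rw [hU, Finset.mem_erase]
      refine ⟨htns, Finset.mem_biUnion.2 ⟨i0, by simp [Nat.lt_succ_iff]; exact hfind.1, ?_⟩⟩
      apply C.mem_blockG_of (show i0 < C.k by have := C.hjs; omega)
      · intro y hy
        obtain ⟨j, hj, rfl⟩ := C.pre_elem_eq (by have := C.hjs; omega) hy
        by_contra hc
        exact (hmin j hj) ⟨by omega, hc⟩
      · intro x hx hxp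
        apply C.staircase_lt (show i0 ≤ C.js by omega)
        · intro i hi hval
          apply hxp
          rw [C.mem_pre (by have := C.hjs; omega)]
          exact ⟨i, hi, hval⟩
        · intro hval
          have : x = C.fel (C.a i0) := by
            apply Fin.val_injective
            rw [hval, C.fel_val (C.le_a0 i0 (by have := C.hjs; omega))]
          exact hfind.2 (this ▸ hx)
      · rw [htk]; have := C.hjs; omega
    · -- all prefix elements present in t: then s < t, contradiction
      push_neg at hex
      exfalso
      have hslt : toColex s < toColex t := by
        rw [Finset.Colex.toColex_lt_toColex]
        constructor
        · exact fun h => hnot (h ▸ hex l le_rfl)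
        · intro x hxs hxt
          refine ⟨C.fel (C.a l), hex l le_rfl, hnot, ?_⟩
          have : x.val < C.a l := by
            apply C.staircase_lt hl
            · intro i hi hval
              apply hxt
              have : x = C.fel (C.a i) := by
                apply Fin.val_injective
                rw [hval, C.fel_val (C.le_a0 i (by have := C.hjs; omega))]
              rw [this]
              exact hex i (by omega)
            · intro hval
              have : x = C.fel (C.a l) := by
                apply Fin.val_injective
                rw [hval, C.fel_val (C.le_a0 l (by have := C.hjs; omega))]
              exact hnot (this ▸ hxs)
          have : x.val ≤ (C.fel (C.a l)).val := by
            rw [C.fel_val (C.le_a0 l (by have := C.hjs; omega))]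
            omega
          exact Fin.le_def.2 this
      exact absurd hlt (not_lt.2 (le_of_lt hslt))
  -- s itself belongs to block l
  have hsblk : s ∈ C.blockG l (C.k - l) := by
    apply C.mem_blockG_of (show l < C.k by have := C.hjs; omega)
    · exact hpre
    · intro x hx hxp
      apply C.staircase_lt hl
      · intro i hi hval
        apply hxp
        rw [C.mem_pre (by have := C.hjs; omega)]
        exact ⟨i, hi, hval⟩
      · intro hval
        have : x = C.fel (C.a l) := by
          apply Fin.val_injective
          rw [hval, C.fel_val (C.le_a0 l (by have := C.hjs; omega))]
        exact hnot (this ▸ hx)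
    · rw [hscard]; have := C.hjs; omega
  have hsbig : s ∈ (range (l+1)).biUnion (fun i => C.blockG i (C.k - i)) :=
    Finset.mem_biUnion.2 ⟨l, by simp, hsblk⟩
  -- cardinality contradiction
  have hUcard : U.card = (∑ i ∈ range (l+1), (C.a i).choose (C.k - i)) - 1 := by
    rw [hU, Finset.card_erase_of_mem hsbig, Finset.card_biUnion]
    · congr 1
      exact Finset.sum_congr rfl (fun i hi => C.blockG_card
        (by simp only [mem_range] at hi; have := C.hjs; omega))
    · intro i hi j hj hij
      simp only [coe_range, Set.mem_Iio] at hi hj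
      rcases Nat.lt_or_ge i j with h | h
      · exact C.blockG_disj h (by have := C.hjs; omega)
      · exact (C.blockG_disj (by omega) (by have := C.hjs; omega)).symm
  have hm1 : A.card ≤ (∑ i ∈ range (l+1), (C.a i).choose (C.k - i)) - 1 := by
    rw [← hUcard]
    exact Finset.card_le_card (hAT.trans hTU)
  -- but the full sum is bigger
  have hsplit : ∑ j ∈ range C.k, (C.a j).choose (C.k - j)
      = ∑ i ∈ range (l+1), (C.a i).choose (C.k - i)
        + ∑ i ∈ Finset.Ico (l+1) C.k, (C.a i).choose (C.k - i) := by
    simp only [Finset.range_eq_Ico]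
    exact (Finset.sum_Ico_consecutive _ (by omega) (by have := C.hjs; omega)).symm
  have hrest : 1 ≤ ∑ i ∈ Finset.Ico (l+1) C.k, (C.a i).choose (C.k - i) := by
    have hmem : l + 1 ∈ Finset.Ico (l+1) C.k := by
      simp only [Finset.mem_Ico]
      have := C.hjs; omega
    calc 1 ≤ (C.a (l+1)).choose (C.k - (l+1)) :=
            Nat.choose_pos (C.hge (l+1) (by have := C.hjs; omega))
      _ ≤ _ := Finset.single_le_sum (f := fun i => (C.a i).choose (C.k - i))
            (fun i _ => Nat.zero_le _) hmem
  rw [hcard, hsplit] at hm1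
  omega

end Ctx
end KKNU


open KKNU in
/-- When the `k`-binomial decomposition has length `k` and `a (k-1) < a 0 - k + 1`,
there is an extremal family that is not isomorphic to an initial colex segment. -/
theorem stmt10 (k m : ℕ) (a : ℕ → ℕ)
    (hk : 0 < k) (hm : 0 < m) (hdec : kBinDecomp k m (k - 1) a)
    (hgap : (a (k - 1) : ℤ) < (a 0 : ℤ) - k + 1) :
    ∃ (n : ℕ) (S : Finset (Finset (Fin n))),
      (∀ s ∈ S, s.card = k) ∧ S.card = m ∧
      (Finset.shadow S).card = ∑ i ∈ Finset.range k, (a i).choose (k - 1 - i) ∧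
      ∀ σ : Equiv.Perm (Fin n), ¬ IsInitColex n k (S.image (Finset.image σ)) := by
  classical
  rw [kBinDecomp] at hdec
  obtain ⟨-, hdecr', hlast, hmsum⟩ := hdec
  -- convert the integer gap hypothesis
  have hgapN : a (k-1) + k ≤ a 0 := by
    have h1 : (a (k-1) : ℤ) + k ≤ (a 0 : ℤ) := by linarith
    exact_mod_cast h1
  -- rule out k = 1
  rcases Nat.lt_or_ge k 2 with hk1 | hk2
  · exfalso
    have : k = 1 := by omega
    subst this
    simp at hgapN
  have hdecr : ∀ i, i + 1 < k → a (i+1) < a i := fun i hi => hdecr' i (by omega)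
  have hlast1 : 1 ≤ a (k-1) := by have := hlast; omega
  -- a i ≥ k - i
  have hge : ∀ i, i < k → k - i ≤ a i := by
    have key : ∀ t, t ≤ k-1 → 1 + t ≤ a (k-1-t) := by
      intro t
      induction t with
      | zero => intro _; simpa using hlast1
      | succ t ih =>
        intro ht
        have h1 := ih (by omega)
        have h2 : (k-1-(t+1)) + 1 = k-1-t := by omega
        have h3 := hdecr (k-1-(t+1)) (by omega)
        rw [h2] at h3
        omega
    intro i hi
    have := key (k-1-i) (by omega)
    have h2 : k-1-(k-1-i) = i := by omega
    rw [h2] at this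
    omega
  -- existence of a gap of size ≥ 2
  have hexgap : ∃ j, j + 2 ≤ k ∧ a (j+1) + 2 ≤ a j := by
    by_contra hno
    push_neg at hno
    have hstep : ∀ j, j + 2 ≤ k → a j = a (j+1) + 1 := by
      intro j hj
      have h1 := hno j hj
      have h2 := hdecr j (by omega)
      omega
    have key : ∀ t, t ≤ k-1 → a (k-1-t) = a (k-1) + t := by
      intro t
      induction t with
      | zero => intro _; simp
      | succ t ih =>
        intro ht
        have h1 := ih (by omega)
        have h2 : (k-1-(t+1)) + 1 = k-1-t := by omega
        have h3 := hstep (k-1-(t+1)) (by omega)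
        rw [h2] at h3
        omega
    have := key (k-1) (by omega)
    simp at this
    omega
  set js := Nat.find hexgap with hjsdef
  have hjsspec := Nat.find_spec hexgap
  have hjsmin := fun j (hj : j < js) => Nat.find_min hexgap hj
  have hstair : ∀ i, i ≤ js → a i + i = a 0 := by
    intro i
    induction i with
    | zero => intro _; omega
    | succ i ih =>
      intro hi
      have h1 := ih (by omega)
      have h2 := hjsmin i (by omega)
      push_neg at h2
      have h3 : i + 2 ≤ k := by have := hjsspec.1; omega
      have h4 := h2 h3
      have h5 := hdecr i (by omega)
      omega
  set C : Ctx := ⟨k, a, js, hk2, hdecr, hge, hjsspec.1, hjsspec.2, hstair⟩ with hC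
  have hCk : C.k = k := rfl
  have hCjs : C.js = js := rfl
  refine ⟨C.n, C.S, ?_, ?_, ?_, ?_⟩
  · exact fun s hs => C.sized_S hs
  · rw [hmsum]
    have h0 : (k-1)+1 = k := by omega
    rw [h0]
    exact C.card_S
  · exact C.card_shadow_S
  · intro σ hIC
    obtain ⟨hsz, hcl⟩ := hIC
    set A := C.S.image (Finset.image σ) with hA
    have hAcard : A.card = ∑ j ∈ range C.k, (C.a j).choose (C.k - j) := by
      rw [hA, Finset.card_image_of_injective _ (Finset.image_injective σ.injective)]
      exact C.card_S
    -- pigeonhole: some preimage of a staircase element avoids the prefix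
    have hpig : ∃ l ≤ C.js, σ.symm (C.fel (C.a l)) ∉ C.pre C.js := by
      by_contra hall
      push_neg at hall
      have hsub : (range (C.js+1)).image (fun l => σ.symm (C.fel (C.a l))) ⊆ C.pre C.js := by
        intro v hv
        obtain ⟨l, hl, rfl⟩ := Finset.mem_image.1 hv
        exact hall l (by simpa [Nat.lt_succ_iff] using hl)
      have hcard1 : ((range (C.js+1)).image (fun l => σ.symm (C.fel (C.a l)))).card = C.js + 1 := by
        rw [Finset.card_image_of_injOn, card_range]
        intro i hi j hj hij
        simp only [coe_range, Set.mem_Iio] at hi hj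
        have h1 : C.fel (C.a i) = C.fel (C.a j) := σ.symm.injective hij
        have h2 := C.fel_inj (C.le_a0 i (by have := C.hjs; omega))
          (C.le_a0 j (by have := C.hjs; omega)) h1
        by_contra hne
        rcases Nat.lt_or_ge i j with h | h
        · exact absurd h2.symm (Nat.ne_of_lt (C.strictanti i j h (by have := C.hjs; omega)))
        · exact absurd h2 (Nat.ne_of_lt (C.strictanti j i (by omega) (by have := C.hjs; omega)))
      have := Finset.card_le_card hsub
      rw [hcard1, C.pre_card (by have := C.hjs; omega)] at this
      omega
    obtain ⟨l, hl, hv⟩ := hpig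
    obtain ⟨s, hscard, hsnot, hvs⟩ := C.missing_avoiding (σ.symm (C.fel (C.a l))) hv
    have himgnot : s.image σ ∉ A := by
      intro h
      obtain ⟨s', hs', heq⟩ := Finset.mem_image.1 h
      have : s' = s := Finset.image_injective σ.injective heq
      exact hsnot (this ▸ hs')
    have himgcard : (s.image σ).card = C.k := by
      rw [Finset.card_image_of_injective _ σ.injective]; exact hscard
    have hmem := C.Aside A hsz hcl hAcard (s.image σ) himgcard himgnot l hl
    obtain ⟨x, hx, hxe⟩ := Finset.mem_image.1 hmem
    have : x = σ.symm (C.fel (C.a l)) := by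
      apply σ.injective
      rw [hxe, Equiv.apply_symm_apply]
    exact hvs (this ▸ hx)
end

section
/- The hypotenusal numbers satisfy a[i] ≥ C(a[i-1]+1, 2) + a[i-1] for all i ≥ 2; consequently a[i] ≥ a[i-1]²/2 for i ≥ 2, and a[i] ≥ 2^(2^(i-2)+1) for all i ≥ 4. -/
open Finset

/-- Hamilton's numbers (rational-valued), following the classical recursion. -/
def hamilton : ℕ → ℚ
  | 0 => 2
  | 1 => 2
  | (m + 2) =>
      2 + ∑ i ∈ Finset.range (m + 1),
        (-1 : ℚ) ^ (i + 2) *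
          (∏ j ∈ Finset.range (i + 2), (hamilton (m + 1 - i) - (j : ℚ))) / ((i + 2).factorial : ℚ)
  termination_by m => m
  decreasing_by simp_wf <;> omega

/-- The hypotenusal numbers `a[n]` (OEIS A001660): `a[0] = 1` and
`a[n] = h[n+1] - h[n]` for `n > 0`, where `h` are Hamilton's numbers.
(`hypot 1 = 1`, `hypot 2 = 2`, `hypot 3 = 6`, `hypot 4 = 36`, `hypot 5 = 876`, …) -/
def hypot (i : ℕ) : ℚ := if i = 0 then 1 else hamilton (i + 1) - hamilton i

-- auxiliary
def Hnat (n : ℕ) : ℕ := (hamilton n).num.toNat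

lemma Hspec {n : ℕ} {N : ℕ} (h : hamilton n = (N : ℚ)) : Hnat n = N := by
  simp [Hnat, h]

lemma ham_eq (m : ℕ) : hamilton (m+2) = 2 + ∑ i ∈ Finset.range (m + 1),
        (-1 : ℚ) ^ (i + 2) *
          (∏ j ∈ Finset.range (i + 2), (hamilton (m + 1 - i) - (j : ℚ))) / ((i + 2).factorial : ℚ) := by
  rw [hamilton]

lemma ham0 : hamilton 0 = 2 := by rw [hamilton]
lemma ham1 : hamilton 1 = 2 := by rw [hamilton]
lemma ham2 : hamilton 2 = 3 := by
  rw [show (2:ℕ)=0+2 from rfl, ham_eq]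
  norm_num [Finset.sum_range_succ, Finset.prod_range_succ, ham1]
lemma ham3 : hamilton 3 = 5 := by
  rw [show (3:ℕ)=1+2 from rfl, ham_eq]
  norm_num [Finset.sum_range_succ, Finset.prod_range_succ, ham1, ham2, Nat.factorial]
lemma ham4 : hamilton 4 = 11 := by
  rw [show (4:ℕ)=2+2 from rfl, ham_eq]
  norm_num [Finset.sum_range_succ, Finset.prod_range_succ, ham1, ham2, ham3, Nat.factorial]
lemma ham5 : hamilton 5 = 47 := by
  rw [show (5:ℕ)=3+2 from rfl, ham_eq]
  norm_num [Finset.sum_range_succ, Finset.prod_range_succ, ham1, ham2, ham3, ham4, Nat.factorial]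

lemma prodCast (N k : ℕ) : ∏ j ∈ Finset.range k, ((N:ℚ) - j) = (N.descFactorial k : ℚ) := by
  rcases le_or_gt k N with h | h
  · rw [Nat.descFactorial_eq_prod_range, Nat.cast_prod]
    refine Finset.prod_congr rfl fun j hj => ?_
    have hj' : j ≤ N := le_trans (Nat.le_of_lt (Finset.mem_range.mp hj)) h
    rw [Nat.cast_sub hj']
  · rw [Nat.descFactorial_eq_zero_iff_lt.mpr h, Nat.cast_zero]
    exact Finset.prod_eq_zero (Finset.mem_range.mpr h) (by simp)

lemma cast_choose3 (x : ℕ) : (x.choose 3 : ℚ) = x*(x-1)*(x-2)/6 := by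
  have h := prodCast x 3
  rw [Nat.descFactorial_eq_factorial_mul_choose] at h
  simp [Finset.prod_range_succ] at h
  rw [eq_div_iff (by norm_num : (6:ℚ) ≠ 0)]
  push_cast at h ⊢
  norm_num [Nat.factorial] at h
  linarith

lemma alt_nonneg : ∀ (n : ℕ) (T : ℕ → ℚ), (∀ i, i+1 < n → T (i+1) ≤ T i) →
    (∀ i, i < n → 0 ≤ T i) → 0 ≤ ∑ i ∈ Finset.range n, (-1:ℚ)^i * T i
  | 0, T, _, _ => by simp
  | 1, T, _, h0 => by simpa using h0 0 (by omega)
  | (n+2), T, hmono, h0 => by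
      have IH := alt_nonneg n (fun i => T (i+2))
        (fun i hi => hmono (i+2) (by omega)) (fun i hi => h0 (i+2) (by omega))
      rw [Finset.sum_range_succ', Finset.sum_range_succ']
      have e : ∀ i, (-1:ℚ)^(i+1+1) * T (i+1+1) = (-1:ℚ)^i * T (i+2) := by
        intro i; rw [pow_add]; ring_nf
      rw [Finset.sum_congr rfl (fun i _ => e i)]
      have h01 : T 1 ≤ T 0 := hmono 0 (by omega)
      have IH' : 0 ≤ ∑ i ∈ Finset.range n, (-1:ℚ)^i * T (i+2) := IH
      norm_num
      linarith [IH']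

lemma alt_lower (n : ℕ) (T : ℕ → ℚ) (hmono : ∀ i, i+1 < n+2 → T (i+1) ≤ T i)
    (h0 : ∀ i, i < n+2 → 0 ≤ T i) :
    T 0 - T 1 ≤ ∑ i ∈ Finset.range (n+2), (-1:ℚ)^i * T i := by
  have IH := alt_nonneg n (fun i => T (i+2))
    (fun i hi => hmono (i+2) (by omega)) (fun i hi => h0 (i+2) (by omega))
  rw [Finset.sum_range_succ', Finset.sum_range_succ']
  have e : ∀ i, (-1:ℚ)^(i+1+1) * T (i+1+1) = (-1:ℚ)^i * T (i+2) := by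
    intro i; rw [pow_add]; ring_nf
  rw [Finset.sum_congr rfl (fun i _ => e i)]
  have IH' : 0 ≤ ∑ i ∈ Finset.range n, (-1:ℚ)^i * T (i+2) := IH
  norm_num
  linarith [IH']

lemma pair_big {g x : ℕ} (hg : 11 ≤ g) (hx : g^2 ≤ 3*x) :
    ∀ k, 2 ≤ k → g.choose (k+1) ≤ x.choose k := by
  intro k hk
  rcases lt_or_ge g (k+1) with h | h
  · simp [Nat.choose_eq_zero_of_lt h]
  · have hgx : g ≤ x := by nlinarith
    have hx41 : 41 ≤ x := by nlinarith
    obtain ⟨k, rfl⟩ : ∃ k2, k = k2+2 := ⟨k-2, by omega⟩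
    have s1 : g.choose (k+2+1) ≤ g * g.choose (k+2) := by
      calc g.choose (k+2+1) ≤ g.choose (k+2+1) * (k+2+1) := Nat.le_mul_of_pos_right _ (by omega)
        _ = g.choose (k+2) * (g - (k+2)) := Nat.choose_succ_right_eq g (k+2)
        _ ≤ g.choose (k+2) * g := Nat.mul_le_mul_left _ (Nat.sub_le _ _)
        _ = g * g.choose (k+2) := Nat.mul_comm _ _
    refine s1.trans ?_
    have key : g * g.descFactorial (k+2) ≤ x.descFactorial (k+2) := by
      rw [Nat.descFactorial_eq_prod_range, Nat.descFactorial_eq_prod_range]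
      rw [Finset.prod_range_succ', Finset.prod_range_succ',
          Finset.prod_range_succ', Finset.prod_range_succ']
      have hP : (∏ i ∈ Finset.range k, (g - (i+1+1))) ≤ ∏ i ∈ Finset.range k, (x - (i+1+1)) := by
        apply Finset.prod_le_prod'
        intro i _
        exact Nat.sub_le_sub_right hgx _
      have hnum : g * ((g - 1) * g) ≤ (x - 1) * x := by
        have h1 : 1 ≤ g := by omega
        have h2 : 1 ≤ x := by omega
        zify [h1, h2]
        have hxz : (g:ℤ)^2 ≤ 3*x := by exact_mod_cast hx
        have hgz : (11:ℤ) ≤ g := by exact_mod_cast hg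
        nlinarith [mul_nonneg (sub_nonneg.2 hxz) (sub_nonneg.2 hxz),
          mul_nonneg (mul_nonneg (sub_nonneg.2 hgz) (sub_nonneg.2 hgz)) (sub_nonneg.2 hgz)]
      simp only [Nat.sub_zero]
      calc g * ((∏ i ∈ Finset.range k, (g - (i+1+1))) * (g-1) * g)
          = (∏ i ∈ Finset.range k, (g - (i+1+1))) * (g * ((g-1)*g)) := by ring
        _ ≤ (∏ i ∈ Finset.range k, (x - (i+1+1))) * ((x-1)*x) :=
            Nat.mul_le_mul hP hnum
        _ = (∏ i ∈ Finset.range k, (x - (i+1+1))) * (x-1) * x := by ring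
    have hf : 0 < (k+2).factorial := Nat.factorial_pos _
    have hmul : (k+2).factorial * (g * g.choose (k+2)) ≤ (k+2).factorial * x.choose (k+2) := by
      calc (k+2).factorial * (g * g.choose (k+2))
          = g * ((k+2).factorial * g.choose (k+2)) := by ring
        _ = g * g.descFactorial (k+2) := by rw [Nat.descFactorial_eq_factorial_mul_choose]
        _ ≤ x.descFactorial (k+2) := key
        _ = (k+2).factorial * x.choose (k+2) := Nat.descFactorial_eq_factorial_mul_choose _ _
    exact Nat.le_of_mul_le_mul_left hmul hf

lemma ham_sum (m : ℕ) (hint : ∀ j, j ≤ m+1 → hamilton j = (Hnat j : ℚ)) :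
    hamilton (m+2) = 2 + ∑ i ∈ Finset.range (m+1),
      (-1:ℚ)^i * ((Hnat (m+1-i)).choose (i+2) : ℚ) := by
  rw [ham_eq]
  congr 1
  refine Finset.sum_congr rfl fun i hi => ?_
  rw [hint (m+1-i) (by omega), prodCast, Nat.descFactorial_eq_factorial_mul_choose]
  have hf : ((i+2).factorial : ℚ) ≠ 0 := by
    exact_mod_cast (Nat.factorial_pos (i+2)).ne'
  rw [Nat.cast_mul]
  field_simp
  rw [pow_add]
  ring

lemma ham_lb (m : ℕ) (hm : 1 ≤ m)
    (hint : ∀ j, j ≤ m+1 → hamilton j = (Hnat j : ℚ))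
    (hpair : ∀ j, 1 ≤ j → j ≤ m+1 → ∀ k, 2 ≤ k →
      (Hnat (j-1)).choose (k+1) ≤ (Hnat j).choose k) :
    2 + ((Hnat (m+1)).choose 2 : ℚ) - ((Hnat m).choose 3 : ℚ) ≤ hamilton (m+2) := by
  rw [ham_sum m hint]
  obtain ⟨n, rfl⟩ : ∃ n, m = n+1 := ⟨m-1, by omega⟩
  have hlow := alt_lower n (fun i => ((Hnat (n+1+1-i)).choose (i+2) : ℚ))
    (fun i hi => by
      have hp := hpair (n+2-i) (by omega) (by omega) (i+2) (by omega)
      have e1 : n+2-i-1 = n+1+1-(i+1) := by omega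
      have e2 : n+2-i = n+1+1-i := by omega
      have e3 : i+2+1 = i+1+2 := by omega
      rw [e1, e2, e3] at hp
      show ((Hnat (n+1+1-(i+1))).choose (i+1+2) : ℚ) ≤ ((Hnat (n+1+1-i)).choose (i+2) : ℚ)
      exact_mod_cast hp)
    (fun i _ => by positivity)
  simp only [Nat.sub_zero, Nat.add_sub_cancel] at hlow
  linarith [hlow]

lemma master : ∀ n : ℕ, hamilton n = (Hnat n : ℚ) ∧
    (1 ≤ n → Hnat (n-1) ≤ Hnat n) ∧
    (4 ≤ n → 11 ≤ Hnat n) ∧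
    (5 ≤ n → (Hnat (n-1))^2 ≤ 3 * Hnat n) ∧
    (1 ≤ n → ∀ k, 2 ≤ k → (Hnat (n-1)).choose (k+1) ≤ (Hnat n).choose k) := by
  have H0 : Hnat 0 = 2 := Hspec (by rw [ham0]; norm_num)
  have H1 : Hnat 1 = 2 := Hspec (by rw [ham1]; norm_num)
  have H2 : Hnat 2 = 3 := Hspec (by rw [ham2]; norm_num)
  have H3 : Hnat 3 = 5 := Hspec (by rw [ham3]; norm_num)
  have H4 : Hnat 4 = 11 := Hspec (by rw [ham4]; norm_num)
  have H5 : Hnat 5 = 47 := Hspec (by rw [ham5]; norm_num)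
  intro n
  induction n using Nat.strong_induction_on with
  | _ n IH =>
  match n with
  | 0 => exact ⟨by rw [ham0, H0]; norm_num, by omega, by omega, by omega, by omega⟩
  | 1 =>
    refine ⟨by rw [ham1, H1]; norm_num, by simp [H0, H1], by omega, by omega, ?_⟩
    intro _ k hk
    simp only [Nat.sub_self, H0]
    calc (2:ℕ).choose (k+1) = 0 := Nat.choose_eq_zero_of_lt (by omega)
      _ ≤ _ := Nat.zero_le _
  | 2 =>
    refine ⟨by rw [ham2, H2]; norm_num, by simp [H1, H2], by omega, by omega, ?_⟩
    intro _ k hk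
    simp only [show (2:ℕ)-1 = 1 from rfl, H1]
    calc (2:ℕ).choose (k+1) = 0 := Nat.choose_eq_zero_of_lt (by omega)
      _ ≤ _ := Nat.zero_le _
  | 3 =>
    refine ⟨by rw [ham3, H3]; norm_num, by simp [H2, H3], by omega, by omega, ?_⟩
    intro _ k hk
    simp only [show (3:ℕ)-1 = 2 from rfl, H2, H3]
    rcases Nat.lt_or_ge k 3 with h | h
    · have : k = 2 := by omega
      subst this; decide
    · calc (3:ℕ).choose (k+1) = 0 := Nat.choose_eq_zero_of_lt (by omega)
        _ ≤ _ := Nat.zero_le _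
  | 4 =>
    refine ⟨by rw [ham4, H4]; norm_num, by simp [H3, H4], by simp [H4], by omega, ?_⟩
    intro _ k hk
    simp only [show (4:ℕ)-1 = 3 from rfl, H3, H4]
    rcases Nat.lt_or_ge k 5 with h | h
    · interval_cases k <;> decide
    · calc (5:ℕ).choose (k+1) = 0 := Nat.choose_eq_zero_of_lt (by omega)
        _ ≤ _ := Nat.zero_le _
  | 5 =>
    refine ⟨by rw [ham5, H5]; norm_num, by simp [H4, H5], by simp [H5], ?_, ?_⟩
    · intro _; simp only [show (5:ℕ)-1 = 4 from rfl, H4, H5]; norm_num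
    · intro _
      simp only [show (5:ℕ)-1 = 4 from rfl, H4, H5]
      exact pair_big (by norm_num) (by norm_num)
  | (m+6) =>
    have hint : ∀ j, j ≤ m+4+1 → hamilton j = (Hnat j : ℚ) := fun j hj => (IH j (by omega)).1
    have hpair : ∀ j, 1 ≤ j → j ≤ m+4+1 → ∀ k, 2 ≤ k →
        (Hnat (j-1)).choose (k+1) ≤ (Hnat j).choose k :=
      fun j h1 h2 k hk => (IH j (by omega)).2.2.2.2 h1 k hk
    have hlb := ham_lb (m+4) (by omega) hint hpair
    set g := Hnat (m+4) with hgdef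
    set x := Hnat (m+5) with hxdef
    have hg11 : 11 ≤ g := (IH (m+4) (by omega)).2.2.1 (by omega)
    have hx11 : 11 ≤ x := (IH (m+5) (by omega)).2.2.1 (by omega)
    have hgx : g^2 ≤ 3*x := by
      have := (IH (m+5) (by omega)).2.2.2.1 (by omega)
      simpa [show m+5-1 = m+4 from by omega] using this
    -- integrality of hamilton (m+6)
    have hzq : hamilton (m+6) =
        ((2 + ∑ i ∈ Finset.range (m+5), (-1:ℤ)^i * ((Hnat (m+5-i)).choose (i+2) : ℤ) : ℤ) : ℚ) := by
      have := ham_sum (m+4) hint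
      rw [show m+4+2 = m+6 from rfl, show m+4+1 = m+5 from rfl] at this
      rw [this]
      push_cast
      ring
    set z : ℤ := 2 + ∑ i ∈ Finset.range (m+5), (-1:ℤ)^i * ((Hnat (m+5-i)).choose (i+2) : ℤ) with hzdef
    have hpk2 : (g.choose 3 : ℚ) ≤ (x.choose 2 : ℚ) := by
      have := hpair (m+5) (by omega) (by omega) 2 (by omega)
      simp only [show m+5-1 = m+4 from by omega] at this
      exact_mod_cast this
    have hlbq : (2:ℚ) ≤ (z:ℚ) := by
      rw [← hzq]
      linarith [hlb, hpk2]
    have hz0 : (0:ℤ) ≤ z := by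
      have : (0:ℚ) ≤ (z:ℚ) := by linarith
      exact_mod_cast this
    have hintX : hamilton (m+6) = ((z.toNat : ℕ) : ℚ) := by
      rw [hzq]
      norm_cast
      exact (Int.toNat_of_nonneg hz0).symm
    have HX : Hnat (m+6) = z.toNat := Hspec hintX
    set X := Hnat (m+6) with hXdef
    have hintc : hamilton (m+6) = (X : ℚ) := by rw [HX]; exact hintX
    -- the quantitative lower bound in ℚ
    have hQ : 2 + (x:ℚ)*((x:ℚ)-1)/2 - (g:ℚ)*((g:ℚ)-1)*((g:ℚ)-2)/6 ≤ (X:ℚ) := by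
      rw [hintc, Nat.cast_choose_two, cast_choose3] at hlb
      linarith [hlb]
    have hgq : (11:ℚ) ≤ (g:ℚ) := by exact_mod_cast hg11
    have hxq : (g:ℚ)^2 ≤ 3*(x:ℚ) := by exact_mod_cast hgx
    have hx41n : 41 ≤ x := by
      have h121 : 121 ≤ g^2 := by nlinarith
      omega
    have hx41 : (41:ℚ) ≤ (x:ℚ) := by exact_mod_cast hx41n
    have hxq0 : (0:ℚ) ≤ (x:ℚ) := by positivity
    have hgq0 : (0:ℚ) ≤ (g:ℚ) := by positivity
    have c4q : (x:ℚ)^2 ≤ 3*(X:ℚ) := by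
      nlinarith [hQ,
        mul_nonneg (sub_nonneg.2 hxq) hxq0,
        mul_nonneg (sub_nonneg.2 hxq) (sq_nonneg (g:ℚ)),
        mul_nonneg (sub_nonneg.2 hx41) hxq0,
        mul_nonneg (sub_nonneg.2 hgq) (pow_nonneg hgq0 3)]
    have c4 : x^2 ≤ 3*X := by exact_mod_cast c4q
    have c3 : 11 ≤ X := by
      have h121 : 121 ≤ x^2 := by
        rw [pow_two]; exact Nat.mul_le_mul hx11 hx11
      omega
    have c2 : x ≤ X := by
      have h11x : 11*x ≤ x^2 := by
        rw [pow_two]; exact Nat.mul_le_mul_right x hx11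
      omega
    refine ⟨hintc, ?_, fun _ => c3, ?_, ?_⟩
    · intro _; simpa [show m+6-1 = m+5 from by omega] using c2
    · intro _; simpa [show m+6-1 = m+5 from by omega] using c4
    · intro _
      simp only [show m+6-1 = m+5 from by omega]
      exact pair_big hx11 c4

lemma hypot_succ (i : ℕ) (hi : 1 ≤ i) : hypot i = hamilton (i+1) - hamilton i := by
  simp [hypot, show i ≠ 0 from by omega]

lemma part1 : ∀ i, 2 ≤ i →
    (hypot (i - 1) + 1) * hypot (i - 1) / 2 + hypot (i - 1) ≤ hypot i := by
  intro i hi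
  match i with
  | 2 => norm_num [hypot, ham1, ham2, ham3]
  | 3 => norm_num [hypot, ham2, ham3, ham4]
  | 4 => norm_num [hypot, ham3, ham4, ham5]
  | (m+5) =>
    have hint : ∀ j, j ≤ m+4+1 → hamilton j = (Hnat j : ℚ) := fun j _ => (master j).1
    have hpair : ∀ j, 1 ≤ j → j ≤ m+4+1 → ∀ k, 2 ≤ k →
        (Hnat (j-1)).choose (k+1) ≤ (Hnat j).choose k :=
      fun j h1 _ k hk => (master j).2.2.2.2 h1 k hk
    have hlb := ham_lb (m+4) (by omega) hint hpair
    set g := Hnat (m+4) with hgdef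
    set x := Hnat (m+5) with hxdef
    set X := Hnat (m+6) with hXdef
    have hg11 : 11 ≤ g := (master (m+4)).2.2.1 (by omega)
    have hgx : g^2 ≤ 3*x := by
      have := (master (m+5)).2.2.2.1 (by omega)
      simpa [show m+5-1 = m+4 from by omega] using this
    have hQ : 2 + (x:ℚ)*((x:ℚ)-1)/2 - (g:ℚ)*((g:ℚ)-1)*((g:ℚ)-2)/6 ≤ (X:ℚ) := by
      rw [(master (m+6)).1, Nat.cast_choose_two, cast_choose3] at hlb
      linarith [hlb]
    have hgq : (11:ℚ) ≤ (g:ℚ) := by exact_mod_cast hg11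
    have hxq : (g:ℚ)^2 ≤ 3*(x:ℚ) := by exact_mod_cast hgx
    have e1 : hypot (m+5) = (X:ℚ) - (x:ℚ) := by
      rw [hypot_succ (m+5) (by omega), (master (m+6)).1, (master (m+5)).1]
    have e2 : hypot (m+5-1) = (x:ℚ) - (g:ℚ) := by
      rw [show m+5-1 = m+4 from by omega, hypot_succ (m+4) (by omega),
        (master (m+5)).1, (master (m+4)).1]
    rw [e1, e2]
    have h3 : (3:ℚ) ≤ (g:ℚ) := by linarith
    nlinarith [hQ, mul_nonneg (sub_nonneg.2 h3) (sub_nonneg.2 hxq),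
      mul_nonneg (sub_nonneg.2 hgq) (sq_nonneg (g:ℚ))]

lemma hypot_nonneg (j : ℕ) : 0 ≤ hypot j := by
  rcases Nat.eq_zero_or_pos j with h | h
  · simp [hypot, h]
  · rw [hypot_succ j h, (master (j+1)).1, (master j).1]
    have := (master (j+1)).2.1 (by omega)
    rw [show j+1-1 = j from by omega] at this
    have : (Hnat j : ℚ) ≤ (Hnat (j+1) : ℚ) := by exact_mod_cast this
    linarith

lemma part2 : ∀ i, 2 ≤ i → (hypot (i - 1)) ^ 2 / 2 ≤ hypot i := by
  intro i hi
  have h1 := part1 i hi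
  have h0 := hypot_nonneg (i-1)
  nlinarith [h1, h0]

lemma part3 : ∀ i, 4 ≤ i → (2 : ℚ) ^ (2 ^ (i - 2) + 1) ≤ hypot i := by
  intro i hi
  induction i, hi using Nat.le_induction with
  | base => norm_num [hypot, ham4, ham5]
  | succ i hi IH =>
    have h2 := part2 (i+1) (by omega)
    rw [show i+1-1 = i from by omega] at h2
    set e := 2^(i-2) with hedef
    have he : 2^(i+1-2) = 2*e := by
      rw [show i+1-2 = (i-2)+1 from by omega, pow_succ]; ring
    rw [he]
    have sq : ((2:ℚ)^(e+1))^2 ≤ (hypot i)^2 := pow_le_pow_left₀ (by positivity) IH 2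
    have e1 : ((2:ℚ)^(e+1))^2 = 2^(2*e+2) := by
      rw [← pow_mul]; ring_nf
    have e2 : (2:ℚ)^(2*e+1) = 2^(2*e+2)/2 := by
      rw [pow_succ]; ring
    rw [e2]
    rw [e1] at sq
    linarith [h2, sq]

/-- Lower bounds for the hypotenusal numbers: `a[i] ≥ C(a[i-1]+1, 2) + a[i-1]` for `i ≥ 2`,
hence `a[i] ≥ a[i-1]²/2` for `i ≥ 2` and `a[i] ≥ 2^(2^(i-2)+1)` for `i ≥ 4`. -/
theorem stmt15 :
    (∀ i, 2 ≤ i →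
      (hypot (i - 1) + 1) * hypot (i - 1) / 2 + hypot (i - 1) ≤ hypot i) ∧
    (∀ i, 2 ≤ i → (hypot (i - 1)) ^ 2 / 2 ≤ hypot i) ∧
    (∀ i, 4 ≤ i → (2 : ℚ) ^ (2 ^ (i - 2) + 1) ≤ hypot i) :=
  ⟨part1, part2, part3⟩
end
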